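/- arXiv:1601.05907 — 7 statements merged into one kernel-verified Lean document; each statement's English description precedes it below -/
import Mathlib

section
/- Let U ⊆ ℂ be a connected open set containing 0, and let h₁,…,h_r and k₁,…,k_s be holomorphic functions on U such that Σ_{σ=1}^r |h_σ(z)|² = Σ_{τ=1}^s |k_τ(z)|² for all z ∈ U. Then the polarized identity Σ_{σ=1}^r h_σ(z)·conj(h_σ(w)) = Σ_{τ=1}^s k_τ(z)·conj(k_τ(w)) holds for all z, w ∈ U. -/
open Complex Metric Filter Finset

lemma conj_comp_hasDerivAt {f : ℂ → ℂ} {f' z : ℂ}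
    (hf : HasDerivAt f f' ((starRingEnd ℂ) z)) :
    HasDerivAt (fun w => (starRingEnd ℂ) (f ((starRingEnd ℂ) w))) ((starRingEnd ℂ) f') z := by
  have hc : HasFDerivAt (fun w : ℂ => (starRingEnd ℂ) w)
      (Complex.conjCLE.toContinuousLinearMap) z := Complex.conjCLE.hasFDerivAt
  have hf1 : HasFDerivAt f
      ((ContinuousLinearMap.smulRight (1 : ℂ →L[ℂ] ℂ) f').restrictScalars ℝ)
      ((starRingEnd ℂ) z) := (hf.hasFDerivAt).restrictScalars ℝ
  have hc2 : HasFDerivAt (fun w : ℂ => (starRingEnd ℂ) w)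
      (Complex.conjCLE.toContinuousLinearMap) (f ((starRingEnd ℂ) z)) :=
    Complex.conjCLE.hasFDerivAt
  have hcomp := hc2.comp z (hf1.comp z hc)
  have heq : (ContinuousLinearMap.smulRight (1 : ℂ →L[ℂ] ℂ)
      ((starRingEnd ℂ) f')).restrictScalars ℝ =
      Complex.conjCLE.toContinuousLinearMap.comp
        ((((ContinuousLinearMap.smulRight (1 : ℂ →L[ℂ] ℂ) f')).restrictScalars ℝ).comp
          Complex.conjCLE.toContinuousLinearMap) := by
    ext x
    simp [mul_comm]
  have hfd : HasFDerivAt (fun w => (starRingEnd ℂ) (f ((starRingEnd ℂ) w)))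
      (ContinuousLinearMap.smulRight (1 : ℂ →L[ℂ] ℂ) ((starRingEnd ℂ) f')) z :=
    hasFDerivAt_of_restrictScalars ℝ hcomp heq
  simpa using hfd.hasDerivAt

lemma freq_real_zero {u : ℂ → ℂ} {δ : ℝ} (hδ : 0 < δ)
    (hu : ∀ x : ℝ, |x| < δ → u x = 0) : ∃ᶠ ζ in nhdsWithin (0:ℂ) {(0:ℂ)}ᶜ, u ζ = 0 := by
  have h0 : Tendsto (fun n : ℕ => (δ / n : ℝ)) atTop (nhds 0) :=
    tendsto_const_div_atTop_nhds_zero_nat δ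
  have h1 : Tendsto (fun n : ℕ => ((δ / n : ℝ) : ℂ)) atTop (nhds (0:ℂ)) := by
    have := (Complex.continuous_ofReal.tendsto 0).comp h0
    simp only [Function.comp_def] at this
    simpa using this
  have h2 : Tendsto (fun n : ℕ => ((δ / n : ℝ) : ℂ)) atTop (nhdsWithin (0:ℂ) {(0:ℂ)}ᶜ) := by
    apply tendsto_nhdsWithin_of_tendsto_nhds_of_eventually_within _ h1
    filter_upwards [eventually_ge_atTop 1] with n hn
    simp only [Set.mem_compl_iff, Set.mem_singleton_iff]
    intro hc
    have hnc : (δ / n : ℝ) = 0 := by exact_mod_cast hc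
    have hnp : (0:ℝ) < (n:ℝ) := by exact_mod_cast hn
    have : (0:ℝ) < δ / n := div_pos hδ hnp
    linarith
  apply h2.frequently
  apply Filter.Eventually.frequently
  filter_upwards [eventually_ge_atTop 2] with n hn
  apply hu
  have hnp : (0:ℝ) < (n:ℝ) := by positivity
  have h1n : (1:ℝ) < (n:ℝ) := by exact_mod_cast hn
  rw [abs_of_pos (div_pos hδ hnp)]
  exact div_lt_self hδ h1n

/-- The two-variable polarization function. -/
noncomputable def polarG (r s : ℕ) (h : Fin r → ℂ → ℂ) (k : Fin s → ℂ → ℂ) (z w : ℂ) : ℂ :=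
  (∑ σ, h σ z * (starRingEnd ℂ) (h σ ((starRingEnd ℂ) w))) -
  (∑ τ, k τ z * (starRingEnd ℂ) (k τ ((starRingEnd ℂ) w)))

/-- Polarization of an identity between sums of squared moduli of holomorphic functions. -/
theorem stmt_0 (U : Set ℂ) (hU : IsOpen U) (hUconn : IsConnected U) (h0 : (0 : ℂ) ∈ U)
    (r s : ℕ) (h : Fin r → ℂ → ℂ) (k : Fin s → ℂ → ℂ)
    (hh : ∀ σ, DifferentiableOn ℂ (h σ) U) (hk : ∀ τ, DifferentiableOn ℂ (k τ) U)
    (heq : ∀ z ∈ U, ∑ σ, ‖h σ z‖ ^ 2 = ∑ τ, ‖k τ z‖ ^ 2) :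
    ∀ z ∈ U, ∀ w ∈ U,
      ∑ σ, h σ z * (starRingEnd ℂ) (h σ w) = ∑ τ, k τ z * (starRingEnd ℂ) (k τ w) := by
  classical
  set S : Set ℂ := (starRingEnd ℂ) ⁻¹' U with hSdef
  have hSopen : IsOpen S := hU.preimage Complex.continuous_conj
  have hSimage : S = (starRingEnd ℂ) '' U := by
    ext w
    simp only [hSdef, Set.mem_preimage, Set.mem_image]
    constructor
    · intro hw; exact ⟨(starRingEnd ℂ) w, hw, by simp⟩
    · rintro ⟨z, hz, rfl⟩; simpa using hz
  have hSconn : IsPreconnected S := by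
    rw [hSimage]
    exact (hUconn.image _ Complex.continuous_conj.continuousOn).isPreconnected
  have h0S : (0:ℂ) ∈ S := by simp [hSdef, h0]
  -- differentiability of the reflected functions
  have hH : ∀ σ, ∀ w ∈ S, DifferentiableAt ℂ
      (fun w => (starRingEnd ℂ) (h σ ((starRingEnd ℂ) w))) w := by
    intro σ w hw
    exact (conj_comp_hasDerivAt
      (((hh σ).differentiableAt (hU.mem_nhds hw)).hasDerivAt)).differentiableAt
  have hK : ∀ τ, ∀ w ∈ S, DifferentiableAt ℂ
      (fun w => (starRingEnd ℂ) (k τ ((starRingEnd ℂ) w))) w := by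
    intro τ w hw
    exact (conj_comp_hasDerivAt
      (((hk τ).differentiableAt (hU.mem_nhds hw)).hasDerivAt)).differentiableAt
  have hhat : ∀ σ, ∀ z ∈ U, DifferentiableAt ℂ (h σ) z :=
    fun σ z hz => (hh σ).differentiableAt (hU.mem_nhds hz)
  have hkat : ∀ τ, ∀ z ∈ U, DifferentiableAt ℂ (k τ) z :=
    fun τ z hz => (hk τ).differentiableAt (hU.mem_nhds hz)
  -- joint differentiability along holomorphic curves
  have hcurve : ∀ (a b : ℂ → ℂ) (ζ : ℂ), DifferentiableAt ℂ a ζ → DifferentiableAt ℂ b ζ →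
      a ζ ∈ U → b ζ ∈ S → DifferentiableAt ℂ (fun ξ => polarG r s h k (a ξ) (b ξ)) ζ := by
    intro a b ζ ha hb haU hbS
    unfold polarG
    apply DifferentiableAt.sub
    · apply DifferentiableAt.fun_sum
      intro σ _
      exact ((hhat σ _ haU).comp ζ ha).mul ((hH σ _ hbS).comp ζ hb)
    · apply DifferentiableAt.fun_sum
      intro τ _
      exact ((hkat τ _ haU).comp ζ ha).mul ((hK τ _ hbS).comp ζ hb)
  -- the diagonal identity
  have hdiag : ∀ z ∈ U, polarG r s h k z ((starRingEnd ℂ) z) = 0 := by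
    intro z hz
    unfold polarG
    rw [sub_eq_zero]
    have e1 : (∑ σ, h σ z * (starRingEnd ℂ) (h σ ((starRingEnd ℂ) ((starRingEnd ℂ) z)))) =
        (((∑ σ, ‖h σ z‖ ^ 2 : ℝ)) : ℂ) := by
      push_cast
      refine Finset.sum_congr rfl fun σ _ => ?_
      rw [Complex.conj_conj, Complex.mul_conj, ← Complex.ofReal_pow, Complex.sq_norm]
    have e2 : (∑ τ, k τ z * (starRingEnd ℂ) (k τ ((starRingEnd ℂ) ((starRingEnd ℂ) z)))) =
        (((∑ τ, ‖k τ z‖ ^ 2 : ℝ)) : ℂ) := by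
      push_cast
      refine Finset.sum_congr rfl fun τ _ => ?_
      rw [Complex.conj_conj, Complex.mul_conj, ← Complex.ofReal_pow, Complex.sq_norm]
    rw [e1, e2, heq z hz]
  -- choose a ball around 0 inside U (and hence inside S)
  obtain ⟨ε, hε, hball⟩ := Metric.isOpen_iff.1 hU 0 h0
  have hballS : ball (0:ℂ) ε ⊆ S := by
    intro w hw
    have : (starRingEnd ℂ) w ∈ ball (0:ℂ) ε := by
      simpa [mem_ball_zero_iff] using hw
    exact hball this
  have hhalf : (0:ℝ) < ε / 2 := by linarith
  -- membership lemma
  have hmem : ∀ (a b : ℂ), a ∈ ball (0:ℂ) (ε/2) → b ∈ ball (0:ℂ) (ε/2) →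
      a + b * Complex.I ∈ ball (0:ℂ) ε ∧ a - b * Complex.I ∈ ball (0:ℂ) ε := by
    intro a b ha hb
    rw [mem_ball_zero_iff] at ha hb ⊢
    rw [mem_ball_zero_iff]
    constructor
    · calc ‖a + b * Complex.I‖ ≤ ‖a‖ + ‖b * Complex.I‖ := norm_add_le _ _
        _ = ‖a‖ + ‖b‖ := by simp
        _ < ε := by linarith
    · calc ‖a - b * Complex.I‖ ≤ ‖a‖ + ‖b * Complex.I‖ := norm_sub_le _ _
        _ = ‖a‖ + ‖b‖ := by simp
        _ < ε := by linarith
  have hrealmem : ∀ x : ℝ, |x| < ε/2 → (x:ℂ) ∈ ball (0:ℂ) (ε/2) := by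
    intro x hx
    rw [mem_ball_zero_iff]
    simpa using hx
  -- Step 1: for x real small, ζ ↦ G(x+iζ, x-iζ) vanishes on the small ball
  have step1 : ∀ x : ℝ, |x| < ε/2 → ∀ ζ ∈ ball (0:ℂ) (ε/2),
      polarG r s h k ((x:ℂ) + ζ * Complex.I) ((x:ℂ) - ζ * Complex.I) = 0 := by
    intro x hx ζ hζ
    have hxb : (x:ℂ) ∈ ball (0:ℂ) (ε/2) := hrealmem x hx
    have hdiff : DifferentiableOn ℂ
        (fun ξ => polarG r s h k ((x:ℂ) + ξ * Complex.I) ((x:ℂ) - ξ * Complex.I))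
        (ball (0:ℂ) (ε/2)) := by
      intro ξ hξ
      have hm := hmem (x:ℂ) ξ hxb hξ
      exact (hcurve (fun ξ => (x:ℂ) + ξ * Complex.I) (fun ξ => (x:ℂ) - ξ * Complex.I) ξ
        (by fun_prop) (by fun_prop) (hball hm.1) (hballS hm.2)).differentiableWithinAt
    have han := hdiff.analyticOnNhd isOpen_ball
    have hfreq : ∃ᶠ ζ in nhdsWithin (0:ℂ) {(0:ℂ)}ᶜ,
        (fun ξ => polarG r s h k ((x:ℂ) + ξ * Complex.I) ((x:ℂ) - ξ * Complex.I)) ζ = 0 := by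
      apply freq_real_zero hhalf
      intro t ht
      have htb : (t:ℂ) ∈ ball (0:ℂ) (ε/2) := hrealmem t ht
      have hm := hmem (x:ℂ) (t:ℂ) hxb htb
      have hconj : (starRingEnd ℂ) ((x:ℂ) + (t:ℂ) * Complex.I) = (x:ℂ) - (t:ℂ) * Complex.I := by
        simp [map_add, map_mul, Complex.conj_I, Complex.conj_ofReal]
        ring
      have := hdiag _ (hball hm.1)
      rw [hconj] at this
      exact this
    have := han.eqOn_zero_of_preconnected_of_frequently_eq_zero
      (convex_ball (0:ℂ) (ε/2)).isPreconnected (mem_ball_self hhalf) hfreq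
    exact this hζ
  -- Step 2: for ζ complex small, ξ ↦ G(ξ+iζ, ξ-iζ) vanishes on the small ball
  have step2 : ∀ ζ ∈ ball (0:ℂ) (ε/2), ∀ ξ ∈ ball (0:ℂ) (ε/2),
      polarG r s h k (ξ + ζ * Complex.I) (ξ - ζ * Complex.I) = 0 := by
    intro ζ hζ ξ hξ
    have hdiff : DifferentiableOn ℂ
        (fun ξ => polarG r s h k (ξ + ζ * Complex.I) (ξ - ζ * Complex.I))
        (ball (0:ℂ) (ε/2)) := by
      intro a ha
      have hm := hmem a ζ ha hζ
      exact (hcurve (fun a => a + ζ * Complex.I) (fun a => a - ζ * Complex.I) a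
        (by fun_prop) (by fun_prop) (hball hm.1) (hballS hm.2)).differentiableWithinAt
    have han := hdiff.analyticOnNhd isOpen_ball
    have hfreq : ∃ᶠ a in nhdsWithin (0:ℂ) {(0:ℂ)}ᶜ,
        (fun a => polarG r s h k (a + ζ * Complex.I) (a - ζ * Complex.I)) a = 0 := by
      apply freq_real_zero hhalf
      intro t ht
      exact step1 t ht ζ hζ
    have := han.eqOn_zero_of_preconnected_of_frequently_eq_zero
      (convex_ball (0:ℂ) (ε/2)).isPreconnected (mem_ball_self hhalf) hfreq
    exact this hξ
  -- Step 3: G vanishes on the small bidisk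
  have step3 : ∀ z ∈ ball (0:ℂ) (ε/2), ∀ w ∈ ball (0:ℂ) (ε/2), polarG r s h k z w = 0 := by
    intro z hz w hw
    set ξ : ℂ := (z + w) / 2 with hξdef
    set ζ : ℂ := (z - w) / (2 * Complex.I) with hζdef
    have hz' : ξ + ζ * Complex.I = z := by
      rw [hξdef, hζdef, div_mul_eq_mul_div, mul_div_mul_right _ _ Complex.I_ne_zero]
      ring
    have hw' : ξ - ζ * Complex.I = w := by
      rw [hξdef, hζdef, div_mul_eq_mul_div, mul_div_mul_right _ _ Complex.I_ne_zero]
      ring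
    rw [mem_ball_zero_iff] at hz hw
    have hξb : ξ ∈ ball (0:ℂ) (ε/2) := by
      rw [mem_ball_zero_iff, hξdef]
      calc ‖(z + w) / 2‖ = ‖z + w‖ / 2 := by simp
        _ ≤ (‖z‖ + ‖w‖) / 2 := by gcongr; exact norm_add_le _ _
        _ < ε / 2 := by linarith
    have hζb : ζ ∈ ball (0:ℂ) (ε/2) := by
      rw [mem_ball_zero_iff, hζdef]
      have : ‖(2 : ℂ) * Complex.I‖ = 2 := by simp
      calc ‖(z - w) / (2 * Complex.I)‖ = ‖z - w‖ / 2 := by rw [norm_div, this]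
        _ ≤ (‖z‖ + ‖w‖) / 2 := by gcongr; exact norm_sub_le _ _
        _ < ε / 2 := by linarith
    have := step2 ζ hζb ξ hξb
    rwa [hz', hw'] at this
  -- Step 4: extend in the first variable to all of U
  have step4 : ∀ w ∈ ball (0:ℂ) (ε/2), ∀ z ∈ U, polarG r s h k z w = 0 := by
    intro w hw
    have hwS : w ∈ S := hballS (ball_subset_ball (by linarith) hw)
    have hdiff : DifferentiableOn ℂ (fun z => polarG r s h k z w) U := by
      intro z hz
      exact (hcurve id (fun _ => w) z differentiableAt_id (differentiableAt_const _)
        hz hwS).differentiableWithinAt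
    have han := hdiff.analyticOnNhd hU
    have hev : (fun z => polarG r s h k z w) =ᶠ[nhds (0:ℂ)] 0 := by
      filter_upwards [ball_mem_nhds (0:ℂ) hhalf] with z hz
      exact step3 z hz w hw
    exact fun z hz => han.eqOn_zero_of_preconnected_of_eventuallyEq_zero
      hUconn.isPreconnected h0 hev hz
  -- Step 5: extend in the second variable to all of S
  have step5 : ∀ z ∈ U, ∀ w ∈ S, polarG r s h k z w = 0 := by
    intro z hz
    have hdiff : DifferentiableOn ℂ (fun w => polarG r s h k z w) S := by
      intro w hw
      exact (hcurve (fun _ => z) id w (differentiableAt_const _) differentiableAt_id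
        hz hw).differentiableWithinAt
    have han := hdiff.analyticOnNhd hSopen
    have hev : (fun w => polarG r s h k z w) =ᶠ[nhds (0:ℂ)] 0 := by
      filter_upwards [ball_mem_nhds (0:ℂ) hhalf] with w hw
      exact step4 w hw z hz
    exact fun w hw => han.eqOn_zero_of_preconnected_of_eventuallyEq_zero
      hSconn h0S hev hw
  -- conclude
  intro z hz w hw
  have hwS : (starRingEnd ℂ) w ∈ S := by
    simp only [hSdef, Set.mem_preimage, Complex.conj_conj]
    exact hw
  have := step5 z hz _ hwS
  unfold polarG at this
  rw [sub_eq_zero] at this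
  simpa using this
end

section
/- Let φ₀, a₁,…,a_r, b₁,…,b_s be holomorphic functions on a connected open neighborhood U of 0 in ℂ with a_i(0) = b_j(0) = 0 for all i, j. If Re(φ₀(z)) = Σ_{i=1}^r |a_i(z)|² − Σ_{j=1}^s |b_j(z)|² for all z ∈ U, then φ₀ is constant on U (with constant value a real number equal to 0 when additionally φ₀(0) = 0). -/
open Complex Filter Finset Topology

/-- Iterated derivatives of an analytic function are analytic on an open set. -/
private lemma aux_itD_an {f : ℂ → ℂ} {U : Set ℂ} (hU : IsOpen U)
    (hf : AnalyticOnNhd ℂ f U) : ∀ k, AnalyticOnNhd ℂ (iteratedDeriv k f) U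
  | 0 => hf
  | (k + 1) => by
      rw [iteratedDeriv_succ]
      exact (aux_itD_an hU hf k).deriv

/-- Key step: if a holomorphic function equals a finite sum of terms `u t * conj (v t)` with
`u t`, `v t` holomorphic, then its derivative equals the sum of `deriv (u t) * conj (v t)`. -/
private lemma aux_key {ι : Type*} [Fintype ι] {U : Set ℂ} (hU : IsOpen U)
    {F : ℂ → ℂ} {u v : ι → ℂ → ℂ}
    (hF : DifferentiableOn ℂ F U)
    (hu : ∀ t, DifferentiableOn ℂ (u t) U)
    (hv : ∀ t, DifferentiableOn ℂ (v t) U)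
    (h : ∀ z ∈ U, F z = ∑ t, u t z * (starRingEnd ℂ) (v t z)) :
    ∀ z ∈ U, deriv F z = ∑ t, deriv (u t) z * (starRingEnd ℂ) (v t z) := by
  intro z hz
  have hdir : ∀ w : ℂ, deriv F z * w
      = (∑ t, deriv (u t) z * (starRingEnd ℂ) (v t z)) * w
        + (∑ t, u t z * (starRingEnd ℂ) (deriv (v t) z)) * (starRingEnd ℂ) w := by
    intro w
    set L : ℝ → ℂ := fun s => z + s • w with hLdef
    have hL0 : L 0 = z := by simp [hLdef]
    have hLd : HasDerivAt L w 0 := by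
      simpa [hLdef] using ((hasDerivAt_id (0 : ℝ)).smul_const w).const_add z
    have hmem : ∀ᶠ s in 𝓝 (0 : ℝ), L s ∈ U := by
      have hcont : ContinuousAt L 0 := hLd.continuousAt
      have h' : ∀ᶠ y in 𝓝 (L 0), y ∈ U := hU.eventually_mem (by rw [hL0]; exact hz)
      exact hcont.eventually h'
    have comp : ∀ {g : ℂ → ℂ}, DifferentiableOn ℂ g U →
        HasDerivAt (fun s : ℝ => g (L s)) (deriv g z * w) 0 := by
      intro g hg
      have hgz : HasFDerivAt g
          ((ContinuousLinearMap.smulRight (1 : ℂ →L[ℂ] ℂ) (deriv g z)).restrictScalars ℝ)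
          (L 0) := by
        rw [hL0]
        exact ((hg.differentiableAt (hU.mem_nhds hz)).hasDerivAt.hasFDerivAt).restrictScalars ℝ
      have hcomp := hgz.comp_hasDerivAt 0 hLd
      rw [mul_comm]
      exact hcomp
    have hterm : ∀ t : ι, HasDerivAt
        (fun s : ℝ => u t (L s) * (starRingEnd ℂ) (v t (L s)))
        (deriv (u t) z * w * (starRingEnd ℂ) (v t z)
          + u t z * (starRingEnd ℂ) (deriv (v t) z * w)) 0 := by
      intro t
      have h1 := comp (hu t)
      have h2 := (comp (hv t)).star
      have h3 := h1.mul h2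
      rw [hL0] at h3
      exact h3
    have hsum : HasDerivAt
        (fun s : ℝ => ∑ t, u t (L s) * (starRingEnd ℂ) (v t (L s)))
        (∑ t, (deriv (u t) z * w * (starRingEnd ℂ) (v t z)
          + u t z * (starRingEnd ℂ) (deriv (v t) z * w))) 0 :=
      HasDerivAt.fun_sum fun t _ => hterm t
    have hFl : HasDerivAt (fun s : ℝ => F (L s)) (deriv F z * w) 0 := comp hF
    have hEq : (fun s : ℝ => F (L s))
        =ᶠ[𝓝 (0 : ℝ)] fun s => ∑ t, u t (L s) * (starRingEnd ℂ) (v t (L s)) :=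
      hmem.mono fun s hs => h _ hs
    have hF2 : HasDerivAt (fun s : ℝ => F (L s))
        (∑ t, (deriv (u t) z * w * (starRingEnd ℂ) (v t z)
          + u t z * (starRingEnd ℂ) (deriv (v t) z * w))) 0 :=
      hsum.congr_of_eventuallyEq hEq
    rw [hFl.unique hF2, Finset.sum_mul, Finset.sum_mul, ← Finset.sum_add_distrib]
    refine Finset.sum_congr rfl fun t _ => ?_
    rw [map_mul]
    ring
  have e1 := hdir 1
  have eI := hdir Complex.I
  rw [map_one, mul_one, mul_one] at e1
  rw [Complex.conj_I] at eI
  have hBI : (∑ t, u t z * (starRingEnd ℂ) (deriv (v t) z)) * Complex.I = 0 := by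
    linear_combination eI / 2 - Complex.I * e1 / 2
  have hB : (∑ t, u t z * (starRingEnd ℂ) (deriv (v t) z)) = 0 :=
    (mul_eq_zero.mp hBI).resolve_right Complex.I_ne_zero
  rw [e1, hB]
  ring

/-- If `Re φ₀` equals a signed sum of squared moduli of holomorphic functions vanishing at `0`,
then `φ₀` is constant, equal to `0` when moreover `φ₀(0) = 0`. -/
theorem stmt_2 (U : Set ℂ) (hU : IsOpen U) (hUconn : IsConnected U) (h0 : (0 : ℂ) ∈ U)
    (r s : ℕ) (φ : ℂ → ℂ) (a : Fin r → ℂ → ℂ) (b : Fin s → ℂ → ℂ)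
    (hφ : DifferentiableOn ℂ φ U)
    (ha : ∀ i, DifferentiableOn ℂ (a i) U) (hb : ∀ j, DifferentiableOn ℂ (b j) U)
    (ha0 : ∀ i, a i 0 = 0) (hb0 : ∀ j, b j 0 = 0)
    (heq : ∀ z ∈ U,
      (φ z).re = ∑ i, ‖a i z‖ ^ 2 - ∑ j, ‖b j z‖ ^ 2) :
    (∀ z ∈ U, φ z = φ 0) ∧ (φ 0 = 0 → ∀ z ∈ U, φ z = 0) := by
  -- analyticity
  have hφA : AnalyticOnNhd ℂ φ U := hφ.analyticOnNhd hU
  have haA : ∀ i, AnalyticOnNhd ℂ (a i) U := fun i => (ha i).analyticOnNhd hU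
  have hbA : ∀ j, AnalyticOnNhd ℂ (b j) U := fun j => (hb j).analyticOnNhd hU
  -- complex form of the hypothesis
  have habs : ∀ w : ℂ, ((‖w‖ : ℝ) : ℂ) ^ 2 = w * (starRingEnd ℂ) w := by
    intro w
    rw [Complex.mul_conj, ← Complex.sq_norm]
    push_cast
    ring
  have hbase : ∀ z ∈ U, φ z
      = (∑ i, 2 * a i z * (starRingEnd ℂ) (a i z))
        + ((∑ j, (-2) * b j z * (starRingEnd ℂ) (b j z))
          + (-1) * (starRingEnd ℂ) (φ z)) := by
    intro z hz
    have h1 := heq z hz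
    have h2 : φ z + (starRingEnd ℂ) (φ z) = ((2 * (φ z).re : ℝ) : ℂ) := Complex.add_conj (φ z)
    have h3 : ((2 * (φ z).re : ℝ) : ℂ)
        = 2 * ((∑ i, (‖a i z‖ : ℝ) ^ 2 : ℝ)
            - (∑ j, (‖b j z‖ : ℝ) ^ 2 : ℝ)) := by
      rw [h1]; push_cast; ring
    have h4 : φ z + (starRingEnd ℂ) (φ z)
        = 2 * ((∑ i, a i z * (starRingEnd ℂ) (a i z))
            - ∑ j, b j z * (starRingEnd ℂ) (b j z)) := by
      rw [h2, h3]
      push_cast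
      simp only [habs]
    simp only [mul_assoc]
    rw [← Finset.mul_sum, ← Finset.mul_sum]
    linear_combination h4
  -- the inductive derivative identity
  have QQ : ∀ k : ℕ, ∀ z ∈ U, iteratedDeriv (k + 1) φ z
      = (∑ i, 2 * iteratedDeriv (k + 1) (a i) z * (starRingEnd ℂ) (a i z))
        + ∑ j, (-2) * iteratedDeriv (k + 1) (b j) z * (starRingEnd ℂ) (b j z) := by
    intro k
    induction k with
    | zero =>
      -- base case via aux_key with index `Fin r ⊕ Fin s ⊕ Unit`
      set u₀ : (Fin r ⊕ (Fin s ⊕ Unit)) → ℂ → ℂ :=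
        Sum.elim (fun i z => 2 * a i z)
          (Sum.elim (fun j z => (-2) * b j z) (fun _ _ => (-1 : ℂ))) with hu₀
      set v₀ : (Fin r ⊕ (Fin s ⊕ Unit)) → ℂ → ℂ :=
        Sum.elim (fun i => a i) (Sum.elim (fun j => b j) (fun _ => φ)) with hv₀
      have hu₀d : ∀ t, DifferentiableOn ℂ (u₀ t) U := by
        rintro (i | j | t)
        · exact (differentiableOn_const 2).mul (ha i)
        · exact (differentiableOn_const (-2)).mul (hb j)
        · exact differentiableOn_const _
      have hv₀d : ∀ t, DifferentiableOn ℂ (v₀ t) U := by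
        rintro (i | j | t)
        · exact ha i
        · exact hb j
        · exact hφ
      have hEq : ∀ z ∈ U, φ z = ∑ t, u₀ t z * (starRingEnd ℂ) (v₀ t z) := by
        intro z hz
        rw [Fintype.sum_sum_type, Fintype.sum_sum_type]
        simpa [hu₀, hv₀] using hbase z hz
      have hkey := aux_key hU hφ hu₀d hv₀d hEq
      intro z hz
      have h5 := hkey z hz
      rw [Fintype.sum_sum_type, Fintype.sum_sum_type] at h5
      have hderiv_u : ∀ i : Fin r, deriv (u₀ (Sum.inl i)) z = 2 * deriv (a i) z := by
        intro i
        simp only [hu₀, Sum.elim_inl]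
        exact deriv_const_mul 2 ((ha i).differentiableAt (hU.mem_nhds hz))
      have hderiv_b : ∀ j : Fin s, deriv (u₀ (Sum.inr (Sum.inl j))) z
          = (-2) * deriv (b j) z := by
        intro j
        simp only [hu₀, Sum.elim_inr, Sum.elim_inl]
        exact deriv_const_mul (-2) ((hb j).differentiableAt (hU.mem_nhds hz))
      simp only [hderiv_u, hderiv_b, hu₀, hv₀, Sum.elim_inl, Sum.elim_inr,
        deriv_const', zero_mul, Finset.sum_const, iteratedDeriv_one] at h5 ⊢
      simpa using h5
    | succ k ih =>
      set u₁ : (Fin r ⊕ Fin s) → ℂ → ℂ :=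
        Sum.elim (fun i z => 2 * iteratedDeriv (k + 1) (a i) z)
          (fun j z => (-2) * iteratedDeriv (k + 1) (b j) z) with hu₁
      set v₁ : (Fin r ⊕ Fin s) → ℂ → ℂ := Sum.elim (fun i => a i) (fun j => b j) with hv₁
      have hu₁d : ∀ t, DifferentiableOn ℂ (u₁ t) U := by
        rintro (i | j)
        · exact (differentiableOn_const 2).mul
            ((aux_itD_an hU (haA i) (k + 1)).differentiableOn)
        · exact (differentiableOn_const (-2)).mul
            ((aux_itD_an hU (hbA j) (k + 1)).differentiableOn)
      have hv₁d : ∀ t, DifferentiableOn ℂ (v₁ t) U := by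
        rintro (i | j)
        · exact ha i
        · exact hb j
      have hFd : DifferentiableOn ℂ (iteratedDeriv (k + 1) φ) U :=
        (aux_itD_an hU hφA (k + 1)).differentiableOn
      have hEq : ∀ z ∈ U, iteratedDeriv (k + 1) φ z
          = ∑ t, u₁ t z * (starRingEnd ℂ) (v₁ t z) := by
        intro z hz
        rw [Fintype.sum_sum_type]
        simpa [hu₁, hv₁] using ih z hz
      have hkey := aux_key hU hFd hu₁d hv₁d hEq
      intro z hz
      have h5 := hkey z hz
      rw [Fintype.sum_sum_type] at h5
      have hderiv_u : ∀ i : Fin r, deriv (u₁ (Sum.inl i)) z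
          = 2 * iteratedDeriv (k + 2) (a i) z := by
        intro i
        simp only [hu₁, Sum.elim_inl]
        rw [deriv_const_mul 2 (((aux_itD_an hU (haA i) (k + 1)).differentiableOn).differentiableAt
          (hU.mem_nhds hz)), ← iteratedDeriv_succ]
      have hderiv_b : ∀ j : Fin s, deriv (u₁ (Sum.inr j)) z
          = (-2) * iteratedDeriv (k + 2) (b j) z := by
        intro j
        simp only [hu₁, Sum.elim_inr]
        rw [deriv_const_mul (-2)
          (((aux_itD_an hU (hbA j) (k + 1)).differentiableOn).differentiableAt
            (hU.mem_nhds hz)), ← iteratedDeriv_succ]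
      rw [iteratedDeriv_succ]
      rw [h5]
      simp only [hderiv_u, hderiv_b, hv₁, Sum.elim_inl, Sum.elim_inr]
  -- all higher derivatives vanish at 0
  have hvanish : ∀ k : ℕ, iteratedDeriv (k + 1) φ 0 = 0 := by
    intro k
    have := QQ k 0 h0
    simpa [ha0, hb0] using this
  -- φ agrees with the constant φ 0 near 0
  have hAt : AnalyticAt ℂ φ 0 := hφA 0 h0
  obtain ⟨p, hp⟩ := hAt
  have hcoeff : ∀ k : ℕ, p.coeff (k + 1) = 0 := by
    intro k
    obtain ⟨rad, hball⟩ := hp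
    have h6 := hball.factorial_smul (y := (1 : ℂ)) (k + 1)
    rw [← iteratedDeriv_eq_iteratedFDeriv, hvanish k] at h6
    have h7 : (Nat.factorial (k + 1) : ℂ) * p.coeff (k + 1) = 0 := by
      rw [FormalMultilinearSeries.apply_eq_pow_smul_coeff, one_pow, one_smul] at h6
      simpa [nsmul_eq_mul] using h6
    have h8 : (Nat.factorial (k + 1) : ℂ) ≠ 0 :=
      Nat.cast_ne_zero.mpr (Nat.factorial_ne_zero _)
    exact (mul_eq_zero.mp h7).resolve_left h8
  have hconst_near : φ =ᶠ[𝓝 (0 : ℂ)] fun _ => φ 0 := by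
    have hiff := hasFPowerSeriesAt_iff.mp hp
    filter_upwards [hiff] with z hz
    have h9 : HasSum (fun n : ℕ => z ^ n • p.coeff n) (φ (0 + z)) := hz
    have h10 : HasSum (fun n : ℕ => z ^ n • p.coeff n) (p.coeff 0) := by
      have := hasSum_single (f := fun n : ℕ => z ^ n • p.coeff n) 0 (by
        intro n hn
        obtain ⟨m, rfl⟩ := Nat.exists_eq_succ_of_ne_zero hn
        simp [hcoeff m])
      simpa using this
    have h11 : φ (0 + z) = p.coeff 0 := h9.unique h10
    rw [zero_add] at h11
    rw [h11]
    exact hp.coeff_zero fun _ => 1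
  -- identity theorem on the connected set U
  have hconstA : AnalyticOnNhd ℂ (fun _ : ℂ => φ 0) U := fun z _ => analyticAt_const
  have hmain : ∀ z ∈ U, φ z = φ 0 := by
    intro z hz
    exact hφA.eqOn_of_preconnected_of_eventuallyEq hconstA hUconn.isPreconnected h0
      hconst_near hz
  exact ⟨hmain, fun h00 z hz => by rw [hmain z hz, h00]⟩
end

section
/- There do not exist finitely many holomorphic functions f₁,…,f_m on a nonempty open subset U of ℂ such that Σ_{i=1}^m |f_i(z)|² = exp(|z|²) for all z ∈ U. -/
open Complex Filter Topology Metric Finset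
open scoped Nat

local notation "conj'" => starRingEnd ℂ

lemma reflect_hasDerivAt {f : ℂ → ℂ} {f' u : ℂ}
    (hf : HasDerivAt f f' (conj' u)) :
    HasDerivAt (fun w => conj' (f (conj' w))) (conj' f') u := by
  rw [hasDerivAt_iff_tendsto_slope] at hf ⊢
  have hconj : Tendsto conj' (𝓝[≠] u) (𝓝[≠] (conj' u)) := by
    apply Filter.Tendsto.inf
    · exact (Complex.continuous_conj.tendsto u)
    · rw [Filter.tendsto_principal_principal]
      intro w hw
      simp only [Set.mem_compl_iff, Set.mem_singleton_iff] at *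
      exact fun h => hw ((starRingEnd ℂ).injective h)
  have := (Complex.continuous_conj.tendsto f').comp (hf.comp hconj)
  refine this.congr (fun w => ?_)
  simp only [Function.comp_apply, slope_def_field]
  rw [map_div₀, map_sub, map_sub]
  simp

lemma exp_tsum (x : ℂ) : Complex.exp x = ∑' n : ℕ, x ^ n / n ! := by
  rw [Complex.exp_eq_exp_ℂ, NormedSpace.exp_eq_tsum_div]

lemma double_sum_factor {N : ℕ} (a b : Fin N → ℂ) :
    ∑ j, ∑ k, a j * conj' (a k) * (b j * conj' (b k)) =
      (∑ j, a j * b j) * conj' (∑ k, a k * b k) := by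
  rw [map_sum, Finset.sum_mul_sum]
  refine Finset.sum_congr rfl fun j _ => Finset.sum_congr rfl fun k _ => ?_
  rw [map_mul]
  ring

lemma polarize {m : ℕ} {f : Fin m → ℂ → ℂ} {U : Set ℂ} (hUopen : IsOpen U)
    (hdiff : ∀ i, DifferentiableOn ℂ (f i) U)
    (hsum : ∀ z ∈ U, ∑ i, ‖f i z‖ ^ 2 = Real.exp (‖z‖ ^ 2))
    {z₀ : ℂ} {r : ℝ} (hr : 0 < r) (hball : Metric.ball z₀ r ⊆ U)
    {u : ℂ} (hu : u ∈ Metric.ball (0 : ℂ) r) :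
    ∑ i, f i (z₀ + u) * conj' (f i (z₀ + conj' u)) =
      Complex.exp ((z₀ + u) * (conj' z₀ + u)) := by
  set G : ℂ → ℂ := fun w => ∑ i, f i (z₀ + w) * conj' (f i (z₀ + conj' w)) with hGdef
  set H : ℂ → ℂ := fun w => Complex.exp ((z₀ + w) * (conj' z₀ + w)) with hHdef
  have hmem : ∀ w : ℂ, w ∈ Metric.ball (0:ℂ) r → z₀ + w ∈ U := by
    intro w hw
    apply hball
    simpa [Metric.mem_ball, dist_eq_norm] using
      (by simpa [Metric.mem_ball, dist_eq_norm] using hw : ‖w‖ < r)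
  have hG : DifferentiableOn ℂ G (Metric.ball 0 r) := by
    apply DifferentiableOn.fun_sum
    intro i _
    apply DifferentiableOn.mul
    · intro w hw
      refine (DifferentiableAt.differentiableWithinAt ?_)
      have h1 : DifferentiableAt ℂ (f i) (z₀ + w) :=
        (hdiff i).differentiableAt (hUopen.mem_nhds (hmem w hw))
      exact h1.comp w ((differentiableAt_const z₀).add differentiableAt_id)
    · intro w hw
      refine (DifferentiableAt.differentiableWithinAt ?_)
      have hw' : conj' w ∈ Metric.ball (0:ℂ) r := by
        simpa [Metric.mem_ball, dist_eq_norm] using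
          (by simpa [Metric.mem_ball, dist_eq_norm] using hw : ‖w‖ < r)
      have h1 : DifferentiableAt ℂ (fun v => f i (z₀ + v)) (conj' w) := by
        have h2 : DifferentiableAt ℂ (f i) (z₀ + conj' w) :=
          (hdiff i).differentiableAt (hUopen.mem_nhds (hmem _ hw'))
        exact h2.comp _ ((differentiableAt_const z₀).add differentiableAt_id)
      have := reflect_hasDerivAt (f := fun v => f i (z₀ + v)) (u := w) h1.hasDerivAt
      exact this.differentiableAt
  have hH : DifferentiableOn ℂ H (Metric.ball 0 r) := by
    apply Differentiable.differentiableOn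
    exact (((differentiable_const z₀).add differentiable_id).mul
      ((differentiable_const (conj' z₀)).add differentiable_id)).cexp
  have key : ∀ x : ℝ, 0 < x → x < r → G ↑x = H ↑x := by
    intro x hx hxr
    have hxball : (x:ℂ) ∈ Metric.ball (0:ℂ) r := by
      simp [Metric.mem_ball, dist_eq_norm, Complex.norm_real, Real.norm_eq_abs,
        _root_.abs_of_pos hx, hxr]
    have hxU : z₀ + (x:ℂ) ∈ U := hmem _ hxball
    have e1 : G ↑x = ((∑ i, ‖f i (z₀ + x)‖ ^ 2 : ℝ) : ℂ) := by
      rw [show ((∑ i, ‖f i (z₀ + x)‖ ^ 2 : ℝ) : ℂ)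
          = ∑ i, ((‖f i (z₀ + x)‖ ^ 2 : ℝ) : ℂ) from by push_cast; rfl]
      simp only [hGdef, Complex.conj_ofReal]
      refine Finset.sum_congr rfl fun i _ => ?_
      rw [Complex.mul_conj]
      norm_cast
      exact (Complex.sq_norm _).symm
    rw [e1, hsum _ hxU, Complex.ofReal_exp]
    have e2 : ((‖z₀ + x‖ ^ 2 : ℝ) : ℂ) = (z₀ + x) * (conj' z₀ + x) := by
      rw [show ((‖z₀ + x‖ ^ 2 : ℝ) : ℂ) = ↑(Complex.normSq (z₀ + x)) from by
        rw [Complex.sq_norm], ← Complex.mul_conj]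
      simp [Complex.conj_ofReal]
    rw [e2]
  have freq : ∃ᶠ w in 𝓝[≠] (0:ℂ), G w = H w := by
    have ht0 : Tendsto (fun n : ℕ => (↑(r / (n + 2)) : ℂ)) atTop (𝓝 0) := by
      have h0 : Tendsto (fun n : ℕ => r / ((n:ℝ) + 2)) atTop (𝓝 0) := by
        have h1 := (tendsto_const_div_atTop_nhds_zero_nat r).comp (tendsto_add_atTop_nat 2)
        refine h1.congr fun n => ?_
        simp only [Function.comp_apply]
        push_cast
        ring
      have h2 := (Complex.continuous_ofReal.tendsto 0).comp h0
      simpa [Function.comp_def] using h2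
    have ht : Tendsto (fun n : ℕ => (↑(r / (n + 2)) : ℂ)) atTop (𝓝[≠] 0) := by
      apply tendsto_nhdsWithin_of_tendsto_nhds_of_eventually_within _ ht0
      refine Eventually.of_forall fun n => ?_
      have hpos : (0:ℝ) < r / (n + 2) := by positivity
      simp only [Set.mem_compl_iff, Set.mem_singleton_iff]
      exact Complex.ofReal_ne_zero.mpr (ne_of_gt hpos)
    refine ht.frequently (Frequently.of_forall fun n => ?_)
    have h1 : (0:ℝ) < r / (n + 2) := by positivity
    have h2 : r / (n + 2) < r := by
      apply div_lt_self hr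
      have : (0:ℝ) ≤ (n:ℝ) := Nat.cast_nonneg n
      linarith
    exact key _ h1 h2
  have hGa := hG.analyticOnNhd Metric.isOpen_ball
  have hHa := hH.analyticOnNhd Metric.isOpen_ball
  exact hGa.eqOn_of_preconnected_of_frequently_eq hHa
    (convex_ball (0:ℂ) r).isPreconnected (Metric.mem_ball_self hr) freq hu

/-- `exp(|z|²)` is not a finite sum of squared moduli of holomorphic functions. -/
theorem stmt_3 : ¬ ∃ (m : ℕ) (f : Fin m → ℂ → ℂ) (U : Set ℂ),
    IsOpen U ∧ U.Nonempty ∧ (∀ i, DifferentiableOn ℂ (f i) U) ∧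
    ∀ z ∈ U, ∑ i, ‖f i z‖ ^ 2 = Real.exp (‖z‖ ^ 2) := by
  rintro ⟨m, f, U, hUopen, ⟨c, hc⟩, hdiff, hsum⟩
  obtain ⟨ε, hε, hball⟩ := Metric.isOpen_iff.mp hUopen c hc
  set δ : ℝ := ε / (4 * (m + 1)) with hδdef
  have hδ : 0 < δ := by positivity
  set t : Fin (m+1) → ℝ := fun j => j * δ with htdef
  set z : Fin (m+1) → ℂ := fun j => c + Complex.I * (t j) with hzdef
  have htb : ∀ j : Fin (m+1), |t j| ≤ ε / 4 := by
    intro j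
    have h1 : (0:ℝ) ≤ t j := by positivity
    have h2 : ((j:ℕ):ℝ) ≤ (m:ℝ) := by exact_mod_cast Fin.is_le j
    have h5 : δ * (4*((m:ℝ)+1)) = ε := by rw [hδdef]; field_simp
    rw [_root_.abs_of_nonneg h1]
    show ((j:ℕ):ℝ) * δ ≤ ε / 4
    nlinarith [mul_le_mul_of_nonneg_right h2 hδ.le, hδ]
  have hzinj : Function.Injective z := by
    intro j k hjk
    simp only [hzdef, add_right_inj] at hjk
    have h1 : ((t j : ℝ) : ℂ) = ((t k : ℝ) : ℂ) := mul_left_cancel₀ Complex.I_ne_zero hjk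
    have h2 : t j = t k := by exact_mod_cast h1
    have h3 : ((j:ℕ):ℝ) * δ = ((k:ℕ):ℝ) * δ := by simpa [htdef] using h2
    have h4 : ((j:ℕ):ℝ) = ((k:ℕ):ℝ) := mul_right_cancel₀ (ne_of_gt hδ) h3
    exact Fin.ext (by exact_mod_cast h4)
  -- polarized identity at the chosen points
  have star : ∀ j k, ∑ i, f i (z j) * conj' (f i (z k)) = Complex.exp (z j * conj' (z k)) := by
    intro j k
    set z₀ : ℂ := c + Complex.I * (((t j + t k) / 2 : ℝ)) with hz₀
    set u : ℂ := Complex.I * (((t j - t k) / 2 : ℝ)) with hudef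
    have hb : Metric.ball z₀ (ε/2) ⊆ U := by
      refine subset_trans (Metric.ball_subset_ball' ?_) hball
      have hd : dist z₀ c = |(t j + t k) / 2| := by
        rw [hz₀, dist_eq_norm, add_sub_cancel_left, norm_mul,
          Complex.norm_I, one_mul, Complex.norm_real, Real.norm_eq_abs]
      rw [hd, abs_div, _root_.abs_two]
      have h3 := abs_add_le (t j) (t k)
      have h4 := htb j; have h5 := htb k
      linarith
    have hu : u ∈ Metric.ball (0:ℂ) (ε/2) := by
      have hn : ‖u‖ = |(t j - t k) / 2| := by
        rw [hudef, norm_mul, Complex.norm_I, one_mul, Complex.norm_real, Real.norm_eq_abs]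
      simp only [Metric.mem_ball, dist_zero_right, hn]
      rw [abs_div, _root_.abs_two]
      have h3 := abs_sub (t j) (t k)
      have h4 := htb j; have h5 := htb k
      linarith
    have h1 := polarize hUopen hdiff hsum (by positivity : (0:ℝ) < ε/2) hb hu
    have e1 : z₀ + u = z j := by
      rw [hz₀, hudef, hzdef]; push_cast; ring
    have e2 : z₀ + conj' u = z k := by
      rw [hz₀, hudef, hzdef]
      simp only [map_mul, Complex.conj_I, Complex.conj_ofReal]
      push_cast; ring
    rw [e1, e2] at h1
    have e3 : z j * (conj' z₀ + u) = z j * conj' (z k) := by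
      rw [hz₀, hudef, hzdef]
      simp only [map_add, map_mul, Complex.conj_I, Complex.conj_ofReal]
      push_cast; ring
    rw [h1]; try rw [e3]
  -- linear dependence
  have hnli : ¬ LinearIndependent ℂ (fun j : Fin (m+1) => (fun i => f i (z j) : Fin m → ℂ)) := by
    intro h
    have h1 := h.fintype_card_le_finrank
    simp [Module.finrank_fintype_fun_eq_card] at h1
  obtain ⟨g, hg0, j₀, hj₀⟩ := Fintype.not_linearIndependent_iff.mp hnli
  have hzero : ∀ i : Fin m, ∑ j, g j * f i (z j) = 0 := by
    intro i
    have := congrFun hg0 i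
    simpa [Finset.sum_apply] using this
  set p : ℕ → ℂ := fun n => ∑ j, g j * z j ^ n with hpdef
  -- the Gram sum is zero
  have claim1 : ∑ j, ∑ k, g j * conj' (g k) * Complex.exp (z j * conj' (z k)) = 0 := by
    have e1 : ∑ j, ∑ k, g j * conj' (g k) * Complex.exp (z j * conj' (z k)) =
        ∑ j, ∑ k, ∑ i, g j * conj' (g k) * (f i (z j) * conj' (f i (z k))) := by
      refine Finset.sum_congr rfl fun j _ => Finset.sum_congr rfl fun k _ => ?_
      rw [← star j k, Finset.mul_sum]
    rw [e1]
    calc ∑ j : Fin (m+1), ∑ k : Fin (m+1), ∑ i : Fin m,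
          g j * conj' (g k) * (f i (z j) * conj' (f i (z k)))
        = ∑ j : Fin (m+1), ∑ i : Fin m, ∑ k : Fin (m+1),
          g j * conj' (g k) * (f i (z j) * conj' (f i (z k))) :=
        Finset.sum_congr rfl fun j _ => Finset.sum_comm
      _ = ∑ i : Fin m, ∑ j : Fin (m+1), ∑ k : Fin (m+1),
          g j * conj' (g k) * (f i (z j) * conj' (f i (z k))) := Finset.sum_comm
      _ = 0 := by
        refine Finset.sum_eq_zero fun i _ => ?_
        rw [double_sum_factor g (fun j => f i (z j)), hzero i, zero_mul]
  -- expand the exponentials as series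
  have hsummable : ∀ x : ℂ, Summable (fun n : ℕ => x ^ n / (n ! : ℂ)) :=
    fun x => NormedSpace.expSeries_div_summable x
  have hpc : ∀ n : ℕ, (∑ j, ∑ k, g j * conj' (g k) * ((z j * conj' (z k)) ^ n / (n ! : ℂ)))
      = p n * conj' (p n) / (n ! : ℂ) := by
    intro n
    have e : ∀ j k : Fin (m+1), g j * conj' (g k) * ((z j * conj' (z k)) ^ n / (n ! : ℂ))
        = (g j * conj' (g k) * (z j ^ n * conj' (z k ^ n))) / (n ! : ℂ) := by
      intro j k
      rw [mul_pow, ← map_pow]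
      ring
    simp_rw [e, ← Finset.sum_div]
    rw [double_sum_factor g (fun j => z j ^ n)]
  have claim2 : ∑ j, ∑ k, g j * conj' (g k) * Complex.exp (z j * conj' (z k)) =
      ∑' n : ℕ, (p n * conj' (p n) / (n ! : ℂ)) := by
    have e1 : ∀ j k : Fin (m+1), g j * conj' (g k) * Complex.exp (z j * conj' (z k)) =
        ∑' n : ℕ, g j * conj' (g k) * ((z j * conj' (z k)) ^ n / (n ! : ℂ)) := by
      intro j k
      rw [exp_tsum, ← tsum_mul_left]
    simp_rw [e1]
    have e2 : ∀ j : Fin (m+1),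
        (∑ k, ∑' n : ℕ, g j * conj' (g k) * ((z j * conj' (z k)) ^ n / (n ! : ℂ)))
        = ∑' n : ℕ, ∑ k, g j * conj' (g k) * ((z j * conj' (z k)) ^ n / (n ! : ℂ)) :=
      fun j => (Summable.tsum_finsetSum (fun k _ => ((hsummable _).mul_left _))).symm
    simp_rw [e2]
    rw [← Summable.tsum_finsetSum (fun j _ => summable_sum (fun k _ => ((hsummable _).mul_left _)))]
    exact tsum_congr hpc
  have hsum2 : Summable (fun n : ℕ => p n * conj' (p n) / (n ! : ℂ)) := by
    have h1 : Summable (fun n : ℕ =>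
        ∑ j, ∑ k, g j * conj' (g k) * ((z j * conj' (z k)) ^ n / (n ! : ℂ))) :=
      summable_sum (fun j _ => summable_sum (fun k _ => ((hsummable _).mul_left _)))
    exact h1.congr hpc
  have hterm : ∀ n : ℕ, (p n * conj' (p n) / (n ! : ℂ)) =
      ((Complex.normSq (p n) / (n ! : ℝ) : ℝ) : ℂ) := by
    intro n
    rw [Complex.mul_conj]
    push_cast
    ring
  have hreal : Summable (fun n : ℕ => Complex.normSq (p n) / (n ! : ℝ)) := by
    rw [← Complex.summable_ofReal]
    exact (hsum2.congr hterm)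
  have hT0 : (∑' n : ℕ, Complex.normSq (p n) / (n ! : ℝ)) = 0 := by
    have hT : ((∑' n : ℕ, Complex.normSq (p n) / (n ! : ℝ) : ℝ) : ℂ) = 0 := by
      rw [Complex.ofReal_tsum]
      rw [show (∑' n : ℕ, ((Complex.normSq (p n) / (n ! : ℝ) : ℝ) : ℂ))
          = ∑' n : ℕ, (p n * conj' (p n) / (n ! : ℂ)) from tsum_congr fun n => (hterm n).symm]
      rw [← claim2]
      exact claim1
    exact_mod_cast hT
  have hp : ∀ n : ℕ, p n = 0 := by
    intro n
    have hb : ∀ k : ℕ, k ≠ n → 0 ≤ Complex.normSq (p k) / (k ! : ℝ) := by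
      intro k _
      exact div_nonneg (Complex.normSq_nonneg _) (Nat.cast_nonneg _)
    have h1 : Complex.normSq (p n) / (n ! : ℝ) ≤ 0 := hT0 ▸ Summable.le_tsum hreal n hb
    have h2 : 0 ≤ Complex.normSq (p n) / (n ! : ℝ) := div_nonneg (Complex.normSq_nonneg _) (Nat.cast_nonneg _)
    have h3 : Complex.normSq (p n) / (n ! : ℝ) = 0 := le_antisymm h1 h2
    rcases div_eq_zero_iff.mp h3 with h | h
    · exact Complex.normSq_eq_zero.mp h
    · exact absurd h (Nat.cast_ne_zero.mpr (Nat.factorial_pos n).ne')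
  -- Vandermonde: the coefficients must vanish
  have hvm : g = 0 := by
    apply Matrix.eq_zero_of_vecMul_eq_zero (M := Matrix.vandermonde z)
    · rw [Matrix.det_vandermonde_ne_zero_iff]
      exact hzinj
    · funext n
      have h1 := hp (n : ℕ)
      simpa [Matrix.vecMul, dotProduct, Matrix.vandermonde, hpdef] using h1
  exact hj₀ (by rw [hvm]; rfl)
end

section
/- There do not exist finitely many holomorphic functions χ₁,…,χ_n on a nonempty open subset U of the unit disc in ℂ and real numbers r₁,…,r_n such that Σ_{i=1}^n r_i |χ_i(z)|² = −log(1 − |z|²) for all z ∈ U. -/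
open Complex Filter Metric Matrix

theorem hasDerivAt_conj_conj {f : ℂ → ℂ} {c w : ℂ}
    (h : HasDerivAt f c ((starRingEnd ℂ) w)) :
    HasDerivAt (fun u => (starRingEnd ℂ) (f ((starRingEnd ℂ) u))) ((starRingEnd ℂ) c) w := by
  have hconj : ∀ x : ℂ, HasFDerivAt (fun u : ℂ => (starRingEnd ℂ) u)
      (Complex.conjCLE.toContinuousLinearMap) x := fun x =>
    Complex.conjCLE.toContinuousLinearMap.hasFDerivAt
  have hf := (h.hasFDerivAt.restrictScalars ℝ)
  have hcomp := (hconj (f ((starRingEnd ℂ) w))).comp w (hf.comp w (hconj w))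
  have h2 : HasFDerivAt (fun u => (starRingEnd ℂ) (f ((starRingEnd ℂ) u)))
      (((1 : ℂ →L[ℂ] ℂ).smulRight ((starRingEnd ℂ) c)).restrictScalars ℝ) w := by
    refine hcomp.congr_fderiv ?_
    ext u
    simp [Complex.conjCLE_apply, mul_comm]
  exact hasFDerivAt_of_restrictScalars ℝ h2 rfl

theorem hasDerivAt_section {G : ℂ × ℂ → ℂ} {L : ℂ × ℂ →L[ℂ] ℂ} {z w : ℂ}
    (hG : HasFDerivAt G L (z, w)) :
    HasDerivAt (fun v => G (z, v)) (L (0, 1)) w := by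
  have hι : HasFDerivAt (fun v : ℂ => ((z, v) : ℂ × ℂ))
      ((0 : ℂ →L[ℂ] ℂ).prod (ContinuousLinearMap.id ℂ ℂ)) w :=
    (hasFDerivAt_const z w).prodMk (hasFDerivAt_id w)
  have h1 := (hG.comp w hι).hasDerivAt
  simp at h1
  exact h1

theorem polar_step {G : ℂ × ℂ → ℂ} {L : ℂ × ℂ →L[ℂ] ℂ} {z : ℂ}
    (hG : HasFDerivAt G L (z, (starRingEnd ℂ) z))
    (h0 : ∀ᶠ u in nhds z, G (u, (starRingEnd ℂ) u) = 0) :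
    L (0, 1) = 0 := by
  set J : ℂ →L[ℝ] ℂ × ℂ :=
    (ContinuousLinearMap.id ℝ ℂ).prod (Complex.conjCLE.toContinuousLinearMap) with hJ
  have hι : HasFDerivAt (fun u : ℂ => ((u, (starRingEnd ℂ) u) : ℂ × ℂ)) J z := by
    have := J.hasFDerivAt (x := z)
    exact this
  have hcomp : HasFDerivAt (fun u => G (u, (starRingEnd ℂ) u))
      ((L.restrictScalars ℝ).comp J) z := (hG.restrictScalars ℝ).comp z hι
  have hzero : HasFDerivAt (fun u => G (u, (starRingEnd ℂ) u)) (0 : ℂ →L[ℝ] ℂ) z := by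
    have h0' : (fun u => G (u, (starRingEnd ℂ) u)) =ᶠ[nhds z] fun _ => (0 : ℂ) := h0
    exact (h0'.hasFDerivAt_iff).mpr (hasFDerivAt_const 0 z)
  have hLJ : (L.restrictScalars ℝ).comp J = 0 := hcomp.unique hzero
  have key : ∀ u : ℂ, L (u, (starRingEnd ℂ) u) = 0 := by
    intro u
    have := congrFun (congrArg (fun (T : ℂ →L[ℝ] ℂ) => (T : ℂ → ℂ)) hLJ) u
    simpa [J, Complex.conjCLE_apply] using this
  have h1 : L (1, 1) = 0 := by simpa using key 1
  have h2 : L (Complex.I, -Complex.I) = 0 := by simpa using key Complex.I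
  have e1 : L (1, 1) = L (1, 0) + L (0, 1) := by
    rw [← map_add]; norm_num
  have e2 : L (Complex.I, -Complex.I) = Complex.I * L (1, 0) - Complex.I * L (0, 1) := by
    have hpt : ((Complex.I, -Complex.I) : ℂ × ℂ) = Complex.I • ((1, 0) : ℂ × ℂ)
        + (-Complex.I) • ((0, 1) : ℂ × ℂ) := by
      simp [Prod.ext_iff]
    rw [hpt, map_add, _root_.map_smul, _root_.map_smul]
    simp only [smul_eq_mul]; ring
  have hA : L (1, 0) + L (0, 1) = 0 := e1 ▸ h1
  have hB : Complex.I * L (1, 0) - Complex.I * L (0, 1) = 0 := e2 ▸ h2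
  have hkey : Complex.I * (L (1,0) + L (0,1))
      - (Complex.I * L (1,0) - Complex.I * L (0,1)) = 0 := by
    rw [hA, hB]; ring
  have h2I : (2 * Complex.I) * L (0, 1) = 0 := by linear_combination hkey
  rcases mul_eq_zero.mp h2I with h | h
  · exact absurd h (by simp [Complex.I_ne_zero])
  · exact h

theorem eventually_zero_of_deriv_zero {f : ℂ → ℂ} {c : ℂ}
    (hf : AnalyticAt ℂ f c) (hd : ∀ n : ℕ, deriv^[n] f c = 0) :
    ∀ᶠ w in nhds c, f w = 0 := by
  obtain ⟨p, r, hp⟩ := hf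
  have hcoef : ∀ (n : ℕ) (y : ℂ), p n (fun _ => y) = 0 := by
    intro n y
    have h1 := hp.factorial_smul y n
    have h2 : iteratedFDeriv ℂ n f c (fun _ => y) = y ^ n • iteratedDeriv n f c := by
      have he : (fun _ : Fin n => y) = fun _ : Fin n => y • (1 : ℂ) := by simp
      rw [iteratedDeriv_eq_iteratedFDeriv, he,
        (iteratedFDeriv ℂ n f c).map_smul_univ (fun _ => y) (fun _ => 1)]
      simp
    rw [h2, iteratedDeriv_eq_iterate, hd n, smul_zero, nsmul_eq_mul] at h1
    have hn : ((Nat.factorial n : ℂ)) ≠ 0 := by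
      exact_mod_cast Nat.factorial_ne_zero n
    exact (mul_eq_zero.mp h1).resolve_left hn
  have hball : ∀ y ∈ EMetric.ball (0 : ℂ) r, f (c + y) = 0 := by
    intro y hy
    have := (hp.hasSum hy).tsum_eq
    rw [← this]
    simp [hcoef]
  filter_upwards [EMetric.ball_mem_nhds c hp.r_pos] with w hw
  have hmem : w - c ∈ EMetric.ball (0 : ℂ) r := by
    simp only [EMetric.mem_ball] at hw ⊢
    show edist (w - c) 0 < r
    simpa [edist_eq_enorm_sub] using hw
  simpa using hball (w - c) hmem

lemma slit_of_norm_lt_one {x : ℂ} (h : ‖x‖ < 1) : 1 - x ∈ Complex.slitPlane := by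
  have := Complex.mem_slitPlane_of_norm_lt_one (z := -x) (by simpa)
  simpa [sub_eq_add_neg] using this

/-- iterated `w`-derivatives of `-log (1 - z*w)`. -/
noncomputable def Ee : ℕ → ℂ → ℂ → ℂ
  | 0, z, w => -Complex.log (1 - z * w)
  | (q+1), z, w => (Nat.factorial q : ℂ) * z ^ (q + 1) / (1 - z * w) ^ (q + 1)

lemma hasDerivAt_Ee (q : ℕ) {z w : ℂ} (h1 : ‖z * w‖ < 1) :
    HasDerivAt (fun v => Ee q z v) (Ee (q + 1) z w) w := by
  have hne : (1 : ℂ) - z * w ≠ 0 := Complex.slitPlane_ne_zero (slit_of_norm_lt_one h1)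
  have hinner : HasDerivAt (fun v : ℂ => 1 - z * v) (-z) w := by
    simpa using ((hasDerivAt_id w).const_mul z).const_sub 1
  cases q with
  | zero =>
    have hlog : HasDerivAt (fun v : ℂ => Complex.log (1 - z * v))
        ((1 - z * w)⁻¹ * (-z)) w :=
      by have := (Complex.hasDerivAt_log (slit_of_norm_lt_one h1)).comp w hinner; exact this
    have := hlog.neg
    refine this.congr_deriv (Eq.symm ?_)
    show (Nat.factorial 0 : ℂ) * z ^ (0 + 1) / (1 - z * w) ^ (0 + 1) = _
    field_simp
    simp
  | succ q =>
    have hpow : HasDerivAt (fun v : ℂ => (1 - z * v) ^ (q + 1))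
        (((q : ℂ) + 1) * (1 - z * w) ^ q * (-z)) w := by
      have := (hinner.pow (q + 1))
      refine this.congr_deriv ?_
      push_cast; ring
    have hdiv : HasDerivAt
        (fun v : ℂ => (Nat.factorial q : ℂ) * z ^ (q + 1) / (1 - z * v) ^ (q + 1))
        ((0 * ((1 - z * w) ^ (q+1)) - ((Nat.factorial q : ℂ) * z ^ (q + 1)) *
          (((q : ℂ) + 1) * (1 - z * w) ^ q * (-z))) / ((1 - z * w) ^ (q+1)) ^ 2) w :=
      (hasDerivAt_const w _).div hpow (pow_ne_zero _ hne)
    refine hdiv.congr_deriv (Eq.symm ?_)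
    show (Nat.factorial (q+1) : ℂ) * z ^ (q + 2) / (1 - z * w) ^ (q + 2) = _
    rw [Nat.factorial_succ]
    field_simp
    push_cast
    ring

/-- `−log(1−|z|²)` is not a finite real linear combination of squared moduli of
holomorphic functions on an open subset of the unit disc. -/
theorem stmt_4 : ¬ ∃ (n : ℕ) (χ : Fin n → ℂ → ℂ) (r : Fin n → ℝ) (U : Set ℂ),
    IsOpen U ∧ U.Nonempty ∧ U ⊆ Metric.ball (0 : ℂ) 1 ∧
    (∀ i, DifferentiableOn ℂ (χ i) U) ∧
    ∀ z ∈ U, ∑ i, r i * ‖χ i z‖ ^ 2 = -Real.log (1 - ‖z‖ ^ 2) := by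
  rintro ⟨n, χ, r, U, hUo, hUne, hU1, hχ, heq⟩
  -- pick a nonzero point of U
  obtain ⟨a, haU, ha0⟩ : ∃ a ∈ U, a ≠ 0 := by
    obtain ⟨a, ha, ha0⟩ := (dense_compl_singleton (0 : ℂ)).inter_open_nonempty U hUo hUne
    exact ⟨a, ha, ha0⟩
  have ha1 : ‖a‖ < 1 := by simpa [Metric.mem_ball] using hU1 haU
  obtain ⟨ε₀, hε₀pos, hε₀U⟩ := Metric.isOpen_iff.mp hUo a haU
  have ha0' : 0 < ‖a‖ := by simpa [norm_pos_iff] using ha0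
  set ε : ℝ := min ε₀ (min ‖a‖ ((1 - ‖a‖) / 2)) with hεdef
  have hεpos : 0 < ε := by
    refine lt_min hε₀pos (lt_min ha0' (by linarith))
  have hεa : ε ≤ ‖a‖ := le_trans (min_le_right _ _) (min_le_left _ _)
  have hεball : Metric.ball a ε ⊆ U := fun x hx => hε₀U (by
    exact Metric.ball_subset_ball (min_le_left _ _) hx)
  have hae : ‖a‖ + ε < 1 := by
    have : ε ≤ (1 - ‖a‖) / 2 := le_trans (min_le_right _ _) (min_le_right _ _)
    linarith
  set B : Set ℂ := Metric.ball a ε with hBdef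
  set B' : Set ℂ := Metric.ball ((starRingEnd ℂ) a) ε with hB'def
  have hmodB : ∀ z ∈ B, ‖z‖ < ‖a‖ + ε := by
    intro z hz
    have : ‖z - a‖ < ε := by simpa [hBdef, Metric.mem_ball, dist_eq_norm] using hz
    calc ‖z‖ = ‖a + (z - a)‖ := by ring_nf
    _ ≤ ‖a‖ + ‖z - a‖ := norm_add_le _ _
    _ < ‖a‖ + ε := by linarith
  have hmodB' : ∀ w ∈ B', ‖w‖ < ‖a‖ + ε := by
    intro w hw
    have h1 : ‖w - (starRingEnd ℂ) a‖ < ε := by simpa [hB'def, Metric.mem_ball, dist_eq_norm] using hw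
    have h2 : ‖(starRingEnd ℂ) a‖ = ‖a‖ := by simp
    calc ‖w‖ = ‖(starRingEnd ℂ) a + (w - (starRingEnd ℂ) a)‖ := by ring_nf
    _ ≤ ‖(starRingEnd ℂ) a‖ + ‖w - (starRingEnd ℂ) a‖ := norm_add_le _ _
    _ < ‖a‖ + ε := by rw [h2]; linarith
  have hsmall : ∀ z ∈ B, ∀ w ∈ B', ‖z * w‖ < 1 := by
    intro z hz w hw
    have h1 := hmodB z hz; have h2 := hmodB' w hw
    have hz0 : (0:ℝ) ≤ ‖z‖ := norm_nonneg _
    have ha' : 0 < ‖a‖ + ε := by positivity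
    calc ‖z * w‖ = ‖z‖ * ‖w‖ := norm_mul _ _
    _ < (‖a‖ + ε) * (‖a‖ + ε) := by nlinarith [norm_nonneg w]
    _ ≤ 1 * 1 := by nlinarith
    _ = 1 := by ring
  have hconjB : ∀ z ∈ B, (starRingEnd ℂ) z ∈ B' := by
    intro z hz
    simpa [hBdef, hB'def, Metric.mem_ball, Complex.dist_conj_conj] using hz
  have hconjB' : ∀ w ∈ B', (starRingEnd ℂ) w ∈ B := by
    intro w hw
    have h1 : dist w ((starRingEnd ℂ) a) < ε := hw
    have h2 : dist ((starRingEnd ℂ) w) a = dist w ((starRingEnd ℂ) a) := by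
      rw [← Complex.dist_conj_conj w ((starRingEnd ℂ) a)]
      simp
    show dist ((starRingEnd ℂ) w) a < ε
    rw [h2]; exact h1
  have hBU : B ⊆ U := hεball
  have haB : a ∈ B := Metric.mem_ball_self hεpos
  -- iterated derivatives of χ
  set F : Fin n → ℕ → ℂ → ℂ := fun i q => deriv^[q] (χ i) with hFdef
  have hFan : ∀ i q, AnalyticOnNhd ℂ (F i q) U := by
    intro i q
    induction q with
    | zero => exact (hχ i).analyticOnNhd hUo
    | succ q ih =>
      have h : F i (q+1) = deriv (F i q) := Function.iterate_succ_apply' deriv q (χ i)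
      rw [h]; exact ih.deriv
  have hFd : ∀ i q, ∀ x ∈ U, HasDerivAt (F i q) (F i (q + 1) x) x := by
    intro i q x hx
    have h1 := ((hFan i q) x hx).differentiableAt.hasDerivAt
    have h2 : F i (q+1) = deriv (F i q) := Function.iterate_succ_apply' deriv q (χ i)
    rw [h2]; exact h1
  -- the polarized family
  set D : ℕ → ℂ → ℂ → ℂ := fun q z w =>
    (∑ i, (r i : ℂ) * χ i z * (starRingEnd ℂ) (F i q ((starRingEnd ℂ) w))) - Ee q z w
    with hDdef
  -- w-derivatives
  have hDw : ∀ q, ∀ z ∈ B, ∀ w ∈ B', HasDerivAt (fun v => D q z v) (D (q + 1) z w) w := by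
    intro q z hz w hw
    have hsum : HasDerivAt
        (fun v => ∑ i, (r i : ℂ) * χ i z * (starRingEnd ℂ) (F i q ((starRingEnd ℂ) v)))
        (∑ i, (r i : ℂ) * χ i z * (starRingEnd ℂ) (F i (q+1) ((starRingEnd ℂ) w))) w := by
      apply HasDerivAt.fun_sum
      intro i _
      exact (hasDerivAt_conj_conj (hFd i q _ (hBU (hconjB' w hw)))).const_mul _
    exact hsum.sub (hasDerivAt_Ee q (hsmall z hz w hw))
  -- joint differentiability
  have hDjoint : ∀ q, ∀ z ∈ B, ∀ w ∈ B',
      DifferentiableAt ℂ (fun p : ℂ × ℂ => D q p.1 p.2) (z, w) := by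
    intro q z hz w hw
    have hne : (1 : ℂ) - z * w ≠ 0 :=
      Complex.slitPlane_ne_zero (slit_of_norm_lt_one (hsmall z hz w hw))
    have hsum : DifferentiableAt ℂ
        (fun p : ℂ × ℂ => ∑ i, (r i : ℂ) * χ i p.1 * (starRingEnd ℂ) (F i q ((starRingEnd ℂ) p.2)))
        (z, w) := by
      apply DifferentiableAt.fun_sum
      intro i _
      have h1 : DifferentiableAt ℂ (fun p : ℂ × ℂ => χ i p.1) (z, w) :=
        (((hχ i).analyticOnNhd hUo) z (hBU hz)).differentiableAt.comp (z, w) differentiableAt_fst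
      have h2 : DifferentiableAt ℂ
          (fun p : ℂ × ℂ => (starRingEnd ℂ) (F i q ((starRingEnd ℂ) p.2))) (z, w) :=
        ((hasDerivAt_conj_conj (hFd i q _ (hBU (hconjB' w hw)))).differentiableAt).comp
          (g := fun v => (starRingEnd ℂ) (F i q ((starRingEnd ℂ) v))) (z, w) differentiableAt_snd
      exact (h1.const_mul _).mul h2
    have hmul : DifferentiableAt ℂ (fun p : ℂ × ℂ => 1 - p.1 * p.2) (z, w) :=
      (differentiableAt_const 1).sub (differentiableAt_fst.mul differentiableAt_snd)
    have hE : DifferentiableAt ℂ (fun p : ℂ × ℂ => Ee q p.1 p.2) (z, w) := by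
      cases q with
      | zero =>
        show DifferentiableAt ℂ (fun p : ℂ × ℂ => -Complex.log (1 - p.1 * p.2)) (z, w)
        exact ((Complex.differentiableAt_log
          (slit_of_norm_lt_one (hsmall z hz w hw))).comp (z, w) hmul).neg
      | succ q =>
        have hshow : (fun p : ℂ × ℂ => Ee (q+1) p.1 p.2)
            = fun p : ℂ × ℂ =>
              ((Nat.factorial q : ℂ) * p.1 ^ (q+1)) * ((1 - p.1 * p.2) ^ (q+1))⁻¹ := by
          funext p; show _ / _ = _; rw [div_eq_mul_inv]
        rw [hshow]
        have hnum : DifferentiableAt ℂ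
            (fun p : ℂ × ℂ => (Nat.factorial q : ℂ) * p.1 ^ (q+1)) (z, w) :=
          (differentiableAt_fst.pow (q+1)).const_mul _
        have hden : DifferentiableAt ℂ
            (fun p : ℂ × ℂ => (1 - p.1 * p.2) ^ (q+1)) (z, w) := hmul.pow (q+1)
        exact hnum.mul (hden.inv (pow_ne_zero _ hne))
    exact hsum.sub hE
  -- vanishing on the antidiagonal
  have hanti : ∀ q, ∀ z ∈ B, D q z ((starRingEnd ℂ) z) = 0 := by
    intro q
    induction q with
    | zero =>
      intro z hz
      have hz1 : ‖z‖ < 1 := lt_trans (hmodB z hz) hae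
      have habs : ‖z‖ < 1 := hz1
      have h01 : (0:ℝ) ≤ 1 - ‖z‖ ^ 2 := by
        nlinarith [norm_nonneg z]
      have hzz : (1:ℂ) - z * (starRingEnd ℂ) z = ((1 - ‖z‖ ^ 2 : ℝ) : ℂ) := by
        rw [Complex.mul_conj, Complex.normSq_eq_norm_sq]
        push_cast; ring
      have hsum : (∑ i, (r i:ℂ) * χ i z * (starRingEnd ℂ) (χ i z))
          = ((∑ i, r i * ‖χ i z‖ ^ 2 : ℝ) : ℂ) := by
        push_cast
        apply Finset.sum_congr rfl
        intro i _
        rw [mul_assoc, Complex.mul_conj, Complex.normSq_eq_norm_sq]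
        push_cast; ring
      show (∑ i, (r i : ℂ) * χ i z * (starRingEnd ℂ) (F i 0 ((starRingEnd ℂ) ((starRingEnd ℂ) z))))
          - Ee 0 z ((starRingEnd ℂ) z) = 0
      simp only [hFdef, Function.iterate_zero, id_eq, Complex.conj_conj]
      show _ - (-Complex.log (1 - z * (starRingEnd ℂ) z)) = 0
      rw [hsum, heq z (hBU hz), hzz, ← Complex.ofReal_log h01]
      push_cast; ring
    | succ q ih =>
      intro z hz
      have hw' := hconjB z hz
      have hJ := (hDjoint q z hz _ hw').hasFDerivAt
      have h0 : ∀ᶠ u in nhds z, (fun p : ℂ × ℂ => D q p.1 p.2) (u, (starRingEnd ℂ) u) = 0 := by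
        filter_upwards [Metric.isOpen_ball.mem_nhds hz] with u hu using ih u hu
      have hL := polar_step hJ h0
      have h1 : HasDerivAt (fun v => D q z v)
          ((fderiv ℂ (fun p : ℂ × ℂ => D q p.1 p.2) (z, (starRingEnd ℂ) z)) (0, 1))
          ((starRingEnd ℂ) z) := hasDerivAt_section hJ
      have h2 := hDw q z hz _ hw'
      have h3 := h2.unique h1
      rw [h3, hL]
  -- polarization
  have hzero : ∀ z ∈ B, ∀ w ∈ B', D 0 z w = 0 := by
    intro z hz w hw
    have hdiff : DifferentiableOn ℂ (fun v => D 0 z v) B' := fun v hv =>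
      ((hDw 0 z hz v hv).differentiableAt).differentiableWithinAt
    have han := hdiff.analyticOnNhd Metric.isOpen_ball
    have hiter : ∀ q, ∀ v ∈ B', deriv^[q] (fun v => D 0 z v) v = D q z v := by
      intro q
      induction q with
      | zero => intro v hv; rfl
      | succ q ih =>
        intro v hv
        rw [Function.iterate_succ_apply']
        have heq' : deriv^[q] (fun v => D 0 z v) =ᶠ[nhds v] fun v => D q z v :=
          Filter.eventually_of_mem (Metric.isOpen_ball.mem_nhds hv) ih
        rw [heq'.deriv_eq]
        exact (hDw q z hz v hv).deriv
    have hev : ∀ᶠ v in nhds ((starRingEnd ℂ) z), (fun v => D 0 z v) v = 0 :=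
      eventually_zero_of_deriv_zero (han _ (hconjB z hz))
        (fun q => by rw [hiter q _ (hconjB z hz)]; exact hanti q z hz)
    exact han.eqOn_zero_of_preconnected_of_eventuallyEq_zero
      (convex_ball _ _).isPreconnected (hconjB z hz) hev hw
  have hpol : ∀ z ∈ B, ∀ u ∈ B,
      ∑ i, (r i : ℂ) * χ i z * (starRingEnd ℂ) (χ i u)
        = -Complex.log (1 - z * (starRingEnd ℂ) u) := by
    intro z hz u hu
    have h0 := hzero z hz ((starRingEnd ℂ) u) (hconjB u hu)
    have : D 0 z ((starRingEnd ℂ) u) =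
        (∑ i, (r i : ℂ) * χ i z * (starRingEnd ℂ) (χ i u))
          - (-Complex.log (1 - z * (starRingEnd ℂ) u)) := by
      simp only [hDdef, hFdef, Function.iterate_zero, id_eq, Complex.conj_conj, Ee]
    rw [this] at h0
    exact sub_eq_zero.mp h0
  
  -- choose n+1 distinct nonzero points in B
  set δ : ℝ := ε / (2 * (n + 1)) with hδdef
  have hδpos : 0 < δ := by positivity
  set u : Fin (n + 1) → ℂ := fun j => a + (((((j : ℕ) : ℝ) + 1) * δ : ℝ) : ℂ) with hudef
  have hu_mem : ∀ j, u j ∈ B := by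
    intro j
    have hj : ((j : ℕ) : ℝ) + 1 ≤ (n : ℝ) + 1 := by
      have := j.isLt
      push_cast
      exact_mod_cast Nat.succ_le_succ (Nat.lt_succ_iff.mp this)
    have h1 : ‖u j - a‖ = (((j : ℕ) : ℝ) + 1) * δ := by
      have : u j - a = (((((j : ℕ) : ℝ) + 1) * δ : ℝ) : ℂ) := by rw [hudef]; ring
      rw [this, Complex.norm_real, Real.norm_of_nonneg (by positivity)]
    show dist (u j) a < ε
    rw [dist_eq_norm, h1]
    calc (((j : ℕ) : ℝ) + 1) * δ ≤ ((n : ℝ) + 1) * δ := by nlinarith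
    _ = ε / 2 := by rw [hδdef]; field_simp
    _ < ε := by linarith
  have hu_ne : ∀ j, u j ≠ 0 := by
    intro j h
    have hmem := hu_mem j
    rw [h] at hmem
    have h2 : ‖a‖ < ε := by
      have : dist (0 : ℂ) a < ε := hmem
      simpa [dist_eq_norm] using this
    linarith
  have hu_inj : Function.Injective u := by
    intro j k h
    have h1 : ((((j : ℕ) : ℝ) + 1) * δ : ℝ) = ((((k : ℕ) : ℝ) + 1) * δ : ℝ) := by
      have := h
      rw [hudef] at this
      simp only [add_right_inj] at this
      exact_mod_cast this
    have h2 : ((j : ℕ) : ℝ) = ((k : ℕ) : ℝ) := by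
      have := mul_right_cancel₀ (ne_of_gt hδpos) h1
      linarith
    have : (j : ℕ) = (k : ℕ) := by exact_mod_cast h2
    exact Fin.ext this
  -- linear dependence of the evaluation vectors
  set v : Fin (n + 1) → (Fin n → ℂ) := fun j i => (r i : ℂ) * (starRingEnd ℂ) (χ i (u j))
    with hvdef
  have hdep : ¬ LinearIndependent ℂ v := by
    intro h
    have h1 := h.fintype_card_le_finrank
    rw [Module.finrank_pi] at h1
    simp only [Fintype.card_fin] at h1
    omega
  obtain ⟨g, hgsum, j₀, hj₀⟩ := Fintype.not_linearIndependent_iff.mp hdep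
  have hgi : ∀ i : Fin n, ∑ j, g j * ((r i : ℂ) * (starRingEnd ℂ) (χ i (u j))) = 0 := by
    intro i
    have h1 := congrFun hgsum i
    simpa [hvdef, Finset.sum_apply] using h1
  set c : Fin (n + 1) → ℂ := fun j => (starRingEnd ℂ) (u j) with hcdef
  have hc_ne : ∀ j, c j ≠ 0 := by
    intro j h
    apply hu_ne j
    have := congrArg (starRingEnd ℂ) h
    simpa [hcdef] using this
  have hc_mem : ∀ j, c j ∈ B' := fun j => hconjB _ (hu_mem j)
  have hc_small : ∀ z ∈ B, ∀ j, ‖z * c j‖ < 1 := fun z hz j => hsmall z hz (c j) (hc_mem j)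
  have hc_ne1 : ∀ z ∈ B, ∀ j, (1 : ℂ) - z * c j ≠ 0 := fun z hz j =>
    Complex.slitPlane_ne_zero (slit_of_norm_lt_one (hc_small z hz j))
  -- the log combination vanishes on B
  have hS : ∀ z ∈ B, ∑ j, g j * Complex.log (1 - z * c j) = 0 := by
    intro z hz
    have hlog : ∀ j, g j * Complex.log (1 - z * c j)
        = ∑ i, -(χ i z * (g j * ((r i : ℂ) * (starRingEnd ℂ) (χ i (u j))))) := by
      intro j
      have h1 := hpol z hz (u j) (hu_mem j)
      have h2 : Complex.log (1 - z * c j)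
          = -∑ i, (r i : ℂ) * χ i z * (starRingEnd ℂ) (χ i (u j)) := by
        rw [hcdef]
        linear_combination h1
      rw [h2, mul_neg, Finset.mul_sum]
      rw [← Finset.sum_neg_distrib]
      refine Finset.sum_congr rfl fun i _ => by ring
    calc ∑ j, g j * Complex.log (1 - z * c j)
        = ∑ j, ∑ i, -(χ i z * (g j * ((r i : ℂ) * (starRingEnd ℂ) (χ i (u j))))) :=
          Finset.sum_congr rfl fun j _ => hlog j
    _ = ∑ i, -(χ i z * (∑ j, g j * ((r i : ℂ) * (starRingEnd ℂ) (χ i (u j))))) := by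
          rw [Finset.sum_comm]
          refine Finset.sum_congr rfl fun i _ => ?_
          rw [Finset.mul_sum, ← Finset.sum_neg_distrib]
    _ = 0 := by
          refine Finset.sum_eq_zero fun i _ => ?_
          rw [hgi i, mul_zero, neg_zero]
  -- bootstrap: all power sums vanish
  have hm : ∀ m : ℕ, ∀ z ∈ B, ∑ j, g j * (c j / (1 - z * c j)) ^ (m + 1) = 0 := by
    intro m
    induction m with
    | zero =>
      intro z hz
      have hder : HasDerivAt (fun y => ∑ j, g j * Complex.log (1 - y * c j))
          (∑ j, g j * ((1 - z * c j)⁻¹ * (-(c j)))) z := by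
        apply HasDerivAt.fun_sum
        intro j _
        have hinner : HasDerivAt (fun y : ℂ => 1 - y * c j) (-(c j)) z := by
          simpa using ((hasDerivAt_id z).mul_const (c j)).const_sub 1
        exact ((Complex.hasDerivAt_log
          (slit_of_norm_lt_one (hc_small z hz j))).comp z hinner).const_mul (g j)
      have hfe : (fun y => ∑ j, g j * Complex.log (1 - y * c j)) =ᶠ[nhds z] fun _ => 0 :=
        Filter.eventually_of_mem (Metric.isOpen_ball.mem_nhds hz) (fun y hy => hS y hy)
      have h0 : ∑ j, g j * ((1 - z * c j)⁻¹ * (-(c j))) = 0 := by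
        have h1 := hder.deriv
        rw [hfe.deriv_eq] at h1
        simp only [deriv_const] at h1
        exact h1.symm
      calc ∑ j, g j * (c j / (1 - z * c j)) ^ (0 + 1)
          = -∑ j, g j * ((1 - z * c j)⁻¹ * (-(c j))) := by
            rw [← Finset.sum_neg_distrib]
            refine Finset.sum_congr rfl fun j _ => ?_
            rw [pow_one, div_eq_mul_inv]
            ring
      _ = 0 := by rw [h0, neg_zero]
    | succ m ih =>
      intro z hz
      have hder : HasDerivAt (fun y => ∑ j, g j * (c j / (1 - y * c j)) ^ (m + 1))
          (∑ j, g j * (((m : ℂ) + 1) * (c j / (1 - z * c j)) ^ (m + 2))) z := by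
        apply HasDerivAt.fun_sum
        intro j _
        have hnej := hc_ne1 z hz j
        have hinner : HasDerivAt (fun y : ℂ => 1 - y * c j) (-(c j)) z := by
          simpa using ((hasDerivAt_id z).mul_const (c j)).const_sub 1
        have hbase : HasDerivAt (fun y : ℂ => c j / (1 - y * c j))
            ((c j / (1 - z * c j)) ^ 2) z := by
          have h1 := (hasDerivAt_const z (c j)).div hinner hnej
          refine h1.congr_deriv ?_
          field_simp
          ring
        have hpow := hbase.pow (m + 1)
        have := hpow.const_mul (g j)
        refine this.congr_deriv ?_
        push_cast
        ring
      have hfe : (fun y => ∑ j, g j * (c j / (1 - y * c j)) ^ (m + 1)) =ᶠ[nhds z] fun _ => 0 :=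
        Filter.eventually_of_mem (Metric.isOpen_ball.mem_nhds hz) (fun y hy => ih y hy)
      have h0 : ∑ j, g j * (((m : ℂ) + 1) * (c j / (1 - z * c j)) ^ (m + 2)) = 0 := by
        have h1 := hder.deriv
        rw [hfe.deriv_eq] at h1
        simp only [deriv_const] at h1
        exact h1.symm
      have h2 : ((m : ℂ) + 1) * ∑ j, g j * (c j / (1 - z * c j)) ^ (m + 2) = 0 := by
        rw [Finset.mul_sum, ← h0]
        exact Finset.sum_congr rfl fun j _ => by ring
      have h3 : ((m : ℂ) + 1) ≠ 0 := by
        have h4 : (((m + 1 : ℕ)) : ℂ) ≠ 0 := Nat.cast_ne_zero.mpr (Nat.succ_ne_zero m)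
        push_cast at h4
        exact h4
      have := mul_eq_zero.mp h2
      rcases this with h | h
      · exact absurd h h3
      · exact h
  -- Vandermonde finish
  set t : Fin (n + 1) → ℂ := fun j => c j / (1 - a * c j) with htdef
  have ht_ne : ∀ j, t j ≠ 0 := fun j => div_ne_zero (hc_ne j) (hc_ne1 a haB j)
  have ht_inj : Function.Injective t := by
    intro j k h
    have hnj := hc_ne1 a haB j
    have hnk := hc_ne1 a haB k
    have hck : c j = c k := by
      rw [htdef] at h
      simp only [div_eq_div_iff hnj hnk] at h
      linear_combination h
    apply hu_inj
    have := congrArg (starRingEnd ℂ) hck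
    simpa [hcdef] using this
  have hWv : ∀ m : Fin (n + 1), ∑ j, g j * t j ^ ((m : ℕ) + 1) = 0 := fun m => by
    have := hm (m : ℕ) a haB
    exact this
  set W : Matrix (Fin (n + 1)) (Fin (n + 1)) ℂ :=
    Matrix.of (fun m j => t j ^ ((m : ℕ) + 1)) with hWdef
  have hWg : W.mulVec g = 0 := by
    funext m
    show ∑ j, W m j * g j = 0
    rw [← hWv m]
    exact Finset.sum_congr rfl fun j _ => mul_comm _ _
  have hWdet : W.det ≠ 0 := by
    have hfac : W = (Matrix.vandermonde t)ᵀ * Matrix.diagonal t := by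
      ext m j
      rw [Matrix.mul_diagonal, Matrix.transpose_apply, Matrix.vandermonde_apply]
      show t j ^ ((m : ℕ) + 1) = _
      rw [pow_succ]
    rw [hfac, Matrix.det_mul, Matrix.det_transpose, Matrix.det_vandermonde, Matrix.det_diagonal]
    apply mul_ne_zero
    · refine Finset.prod_ne_zero_iff.mpr fun i _ => ?_
      refine Finset.prod_ne_zero_iff.mpr fun j hj => ?_
      have hij : i ≠ j := by
        intro hij
        rw [hij] at hj
        simp [Finset.mem_Ioi] at hj
      exact sub_ne_zero.mpr fun hc => hij (ht_inj hc.symm)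
    · exact Finset.prod_ne_zero_iff.mpr fun j _ => ht_ne j
  have hg0 : g = 0 := Matrix.eq_zero_of_mulVec_eq_zero hWdet hWg
  rw [hg0] at hj₀
  exact hj₀ rfl
end

section
/- There do not exist finitely many holomorphic functions h₁,…,h_r, k₁,…,k_s on a nonempty open subset U of ℂ such that log(1 + |z|²) = Σ_{σ=1}^r |h_σ(z)|² − Σ_{τ=1}^s |k_τ(z)|² for all z ∈ U. -/
open Complex

noncomputable section

namespace Stmt5


/-- generalized Wirtinger derivative: `e = -I` gives `∂`, `e = I` gives `∂̄`. -/
def wgen (e : ℂ) (f : ℂ → ℂ) (z : ℂ) : ℂ :=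
  (fderiv ℝ f z 1 + e * fderiv ℝ f z Complex.I) / 2

def wd : (ℂ → ℂ) → ℂ → ℂ := wgen (-Complex.I)
def wdb : (ℂ → ℂ) → ℂ → ℂ := wgen Complex.I

lemma wgen_hasFDerivAt {e : ℂ} {f : ℂ → ℂ} {L : ℂ →L[ℝ] ℂ} {z : ℂ}
    (h : HasFDerivAt f L z) :
    wgen e f z = (L 1 + e * L Complex.I) / 2 := by
  rw [wgen, h.fderiv]

lemma wgen_congr {e : ℂ} {f g : ℂ → ℂ} {z : ℂ} (h : f =ᶠ[nhds z] g) :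
    wgen e f z = wgen e g z := by
  rw [wgen, wgen, h.fderiv_eq]

lemma wgen_add {e : ℂ} {f g : ℂ → ℂ} {z : ℂ} (hf : DifferentiableAt ℝ f z)
    (hg : DifferentiableAt ℝ g z) :
    wgen e (f + g) z = wgen e f z + wgen e g z := by
  show wgen e (fun w => f w + g w) z = _
  rw [wgen_hasFDerivAt (hf.hasFDerivAt.fun_add hg.hasFDerivAt), wgen, wgen]
  simp [hf.hasFDerivAt.fderiv, hg.hasFDerivAt.fderiv]
  ring

lemma wgen_smul {e c : ℂ} {f : ℂ → ℂ} {z : ℂ} (hf : DifferentiableAt ℝ f z) :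
    wgen e (c • f) z = c * wgen e f z := by
  show wgen e (fun w => c • f w) z = _
  rw [wgen_hasFDerivAt (hf.hasFDerivAt.fun_const_smul c), wgen]
  simp [smul_eq_mul]
  ring

lemma wgen_zero {e : ℂ} {z : ℂ} : wgen e (0 : ℂ → ℂ) z = 0 := by
  show wgen e (fun _ => (0:ℂ)) z = 0
  rw [wgen_hasFDerivAt (hasFDerivAt_const (0:ℂ) z)]
  simp

lemma wgen_mul {e : ℂ} {f g : ℂ → ℂ} {z : ℂ} (hf : DifferentiableAt ℝ f z)
    (hg : DifferentiableAt ℝ g z) :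
    wgen e (fun w => f w * g w) z = wgen e f z * g z + f z * wgen e g z := by
  rw [wgen_hasFDerivAt (hf.hasFDerivAt.fun_mul hg.hasFDerivAt), wgen, wgen]
  simp [smul_eq_mul]
  ring


lemma wd_def : wd = wgen (-Complex.I) := rfl
lemma wdb_def : wdb = wgen Complex.I := rfl
lemma wgen_const {e : ℂ} {z c : ℂ} : wgen e (fun _ => c) z = 0 := by
  rw [wgen_hasFDerivAt (hasFDerivAt_const c z)]
  simp

lemma wd_eq_deriv {f : ℂ → ℂ} {z : ℂ} (h : DifferentiableAt ℂ f z) :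
    wd f z = deriv f z := by
  rw [wd, wgen_hasFDerivAt (h.hasFDerivAt.restrictScalars ℝ)]
  have h1 : (fderiv ℂ f z) 1 = deriv f z := fderiv_apply_one_eq_deriv
  have hI : (fderiv ℂ f z) Complex.I = Complex.I * deriv f z := by
    have := (fderiv ℂ f z).map_smul Complex.I (1:ℂ)
    simpa [smul_eq_mul, h1] using this
  simp only [ContinuousLinearMap.coe_restrictScalars', h1, hI]
  have h2 : (-Complex.I) * (Complex.I * deriv f z) = deriv f z := by
    rw [← mul_assoc, neg_mul, Complex.I_mul_I]; ring
  rw [h2]; ring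

lemma wdb_eq_zero {f : ℂ → ℂ} {z : ℂ} (h : DifferentiableAt ℂ f z) :
    wdb f z = 0 := by
  rw [wdb, wgen_hasFDerivAt (h.hasFDerivAt.restrictScalars ℝ)]
  have h1 : (fderiv ℂ f z) 1 = deriv f z := fderiv_apply_one_eq_deriv
  have hI : (fderiv ℂ f z) Complex.I = Complex.I * deriv f z := by
    have := (fderiv ℂ f z).map_smul Complex.I (1:ℂ)
    simpa [smul_eq_mul, h1] using this
  simp only [ContinuousLinearMap.coe_restrictScalars', h1, hI]
  have h2 : Complex.I * (Complex.I * deriv f z) = -deriv f z := by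
    rw [← mul_assoc, Complex.I_mul_I]; ring
  rw [h2]; ring



lemma hasFDerivAt_conj (w : ℂ) :
    HasFDerivAt (fun x : ℂ => (starRingEnd ℂ) x)
      (Complex.conjCLE.toContinuousLinearMap) w := by
  exact Complex.conjCLE.hasFDerivAt

lemma diff_conj_comp {f : ℂ → ℂ} {z : ℂ} (hf : DifferentiableAt ℝ f z) :
    DifferentiableAt ℝ (fun w => (starRingEnd ℂ) (f w)) z :=
  (hasFDerivAt_conj (f z)).differentiableAt.comp z hf

lemma wd_conj_comp {f : ℂ → ℂ} {z : ℂ} (h : DifferentiableAt ℂ f z) :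
    wd (fun w => (starRingEnd ℂ) (f w)) z = 0 := by
  have hc : HasFDerivAt (fun w => (starRingEnd ℂ) (f w))
      ((Complex.conjCLE.toContinuousLinearMap).comp
        (ContinuousLinearMap.restrictScalars ℝ (fderiv ℂ f z))) z :=
    ((hasFDerivAt_conj (f z)).comp z (h.hasFDerivAt.restrictScalars ℝ))
  rw [wd, wgen_hasFDerivAt hc]
  have h1 : (fderiv ℂ f z) 1 = deriv f z := fderiv_apply_one_eq_deriv
  have hI : (fderiv ℂ f z) Complex.I = Complex.I * deriv f z := by
    have := (fderiv ℂ f z).map_smul Complex.I (1:ℂ)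
    simpa [smul_eq_mul, h1] using this
  simp [ContinuousLinearMap.coe_comp', Function.comp, h1, hI, map_mul]
  ring_nf
  simp [Complex.I_sq]
  try ring

lemma wdb_conj_comp {f : ℂ → ℂ} {z : ℂ} (h : DifferentiableAt ℂ f z) :
    wdb (fun w => (starRingEnd ℂ) (f w)) z = (starRingEnd ℂ) (deriv f z) := by
  have hc : HasFDerivAt (fun w => (starRingEnd ℂ) (f w))
      ((Complex.conjCLE.toContinuousLinearMap).comp
        (ContinuousLinearMap.restrictScalars ℝ (fderiv ℂ f z))) z :=
    ((hasFDerivAt_conj (f z)).comp z (h.hasFDerivAt.restrictScalars ℝ))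
  rw [wdb, wgen_hasFDerivAt hc]
  have h1 : (fderiv ℂ f z) 1 = deriv f z := fderiv_apply_one_eq_deriv
  have hI : (fderiv ℂ f z) Complex.I = Complex.I * deriv f z := by
    have := (fderiv ℂ f z).map_smul Complex.I (1:ℂ)
    simpa [smul_eq_mul, h1] using this
  simp [ContinuousLinearMap.coe_comp', Function.comp, h1, hI, map_mul]
  ring_nf
  simp [Complex.I_sq]
  try ring

lemma wgen_pow {e : ℂ} {f : ℂ → ℂ} {z : ℂ} (hf : DifferentiableAt ℝ f z) (c : ℕ) :
    wgen e (fun w => f w ^ c) z = (c : ℂ) * f z ^ (c - 1) * wgen e f z := by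
  induction c with
  | zero => simpa using wgen_const
  | succ c ih =>
      have : (fun w => f w ^ (c+1)) = fun w => f w * f w ^ c := by
        funext w; ring
      rw [this, wgen_mul hf (hf.fun_pow c), ih]
      cases c with
      | zero => simp
      | succ k =>
          simp only [Nat.add_sub_cancel]
          push_cast
          ring



lemma one_add_normSq_pos (z : ℂ) : 0 < 1 + Complex.normSq z := by
  have := Complex.normSq_nonneg z; linarith

lemma hasFDerivAt_normSq (z : ℂ) : ∃ L : ℂ →L[ℝ] ℝ,
    HasFDerivAt Complex.normSq L z ∧ L 1 = 2*z.re ∧ L Complex.I = 2*z.im := by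
  have hfun : Complex.normSq = fun x : ℂ =>
      Complex.reCLM x * Complex.reCLM x + Complex.imCLM x * Complex.imCLM x := by
    funext w; simp [Complex.normSq_apply]
  have h := ((Complex.reCLM.hasFDerivAt (x:=z)).fun_mul (Complex.reCLM.hasFDerivAt (x:=z))).fun_add
      ((Complex.imCLM.hasFDerivAt (x:=z)).fun_mul (Complex.imCLM.hasFDerivAt (x:=z)))
  rw [← hfun] at h
  refine ⟨_, h, ?_, ?_⟩ <;>
  · simp
    ring

def ψ (z : ℂ) : ℂ := ((1 + Complex.normSq z)⁻¹ : ℝ)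

lemma hasFDerivAt_psi (z : ℂ) : ∃ M : ℂ →L[ℝ] ℂ, HasFDerivAt ψ M z ∧
    M 1 = ((-((1 + Complex.normSq z)^2)⁻¹ * (2*z.re) : ℝ) : ℂ) ∧
    M Complex.I = ((-((1 + Complex.normSq z)^2)⁻¹ * (2*z.im) : ℝ) : ℂ) := by
  obtain ⟨L, hL, h1, hI⟩ := hasFDerivAt_normSq z
  have hg1 : HasFDerivAt (fun w : ℂ => 1 + Complex.normSq w) L z := hL.const_add 1
  have h2 : HasFDerivAt (fun w : ℂ => ((1 + Complex.normSq w)⁻¹ : ℝ))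
      ((-((1 + Complex.normSq z)^2)⁻¹) • L) z :=
    (hasDerivAt_inv (ne_of_gt (one_add_normSq_pos z))).comp_hasFDerivAt z hg1
  refine ⟨_, Complex.ofRealCLM.hasFDerivAt.comp z h2, ?_, ?_⟩ <;>
    simp [h1, hI]

lemma diff_psi (z : ℂ) : DifferentiableAt ℝ ψ z := by
  obtain ⟨M, hM, -, -⟩ := hasFDerivAt_psi z
  exact hM.differentiableAt

lemma conj_eq (z : ℂ) : (starRingEnd ℂ) z = (z.re : ℂ) - (z.im : ℂ) * Complex.I := by
  simp [Complex.ext_iff]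

lemma wd_psi (z : ℂ) : wd ψ z = -((starRingEnd ℂ) z) * ψ z ^ 2 := by
  obtain ⟨M, hM, h1, hI⟩ := hasFDerivAt_psi z
  rw [wd_def, wgen_hasFDerivAt hM, h1, hI, conj_eq]
  simp only [ψ]
  have hne : (1:ℂ) + (Complex.normSq z : ℂ) ≠ 0 := by
    rw [show (1:ℂ) + (Complex.normSq z : ℂ) = ((1 + Complex.normSq z : ℝ) : ℂ) by push_cast; ring]
    exact Complex.ofReal_ne_zero.mpr (ne_of_gt (one_add_normSq_pos z))
  push_cast
  field_simp
  ring

lemma wdb_psi (z : ℂ) : wdb ψ z = -z * ψ z ^ 2 := by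
  obtain ⟨M, hM, h1, hI⟩ := hasFDerivAt_psi z
  rw [wdb_def, wgen_hasFDerivAt hM, h1, hI]
  have hc : ((-((1 + Complex.normSq z)^2)⁻¹ : ℝ) : ℂ) = -(ψ z)^2 := by
    simp only [ψ]
    push_cast
    rw [inv_pow]
  calc ((( -((1 + Complex.normSq z)^2)⁻¹ * (2*z.re) : ℝ) : ℂ)
        + Complex.I * ((-((1 + Complex.normSq z)^2)⁻¹ * (2*z.im) : ℝ) : ℂ)) / 2
      = ((-((1 + Complex.normSq z)^2)⁻¹ : ℝ) : ℂ) * ((z.re:ℂ) + (z.im:ℂ)*Complex.I) := by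
        push_cast; ring
    _ = ((-((1 + Complex.normSq z)^2)⁻¹ : ℝ) : ℂ) * z := by rw [Complex.re_add_im]
    _ = -z * ψ z ^ 2 := by rw [hc]; ring

def Lfun (z : ℂ) : ℂ := ((Real.log (1 + Complex.normSq z) : ℝ) : ℂ)

lemma hasFDerivAt_Lfun (z : ℂ) : ∃ M : ℂ →L[ℝ] ℂ, HasFDerivAt Lfun M z ∧
    M 1 = (((1 + Complex.normSq z)⁻¹ * (2*z.re) : ℝ) : ℂ) ∧
    M Complex.I = (((1 + Complex.normSq z)⁻¹ * (2*z.im) : ℝ) : ℂ) := by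
  obtain ⟨L, hL, h1, hI⟩ := hasFDerivAt_normSq z
  have hg1 : HasFDerivAt (fun w : ℂ => 1 + Complex.normSq w) L z := hL.const_add 1
  have h2 : HasFDerivAt (fun w : ℂ => Real.log (1 + Complex.normSq w))
      (((1 + Complex.normSq z)⁻¹) • L) z :=
    by have := (Real.hasDerivAt_log (ne_of_gt (one_add_normSq_pos z))).comp_hasFDerivAt z hg1
       exact this
  refine ⟨_, Complex.ofRealCLM.hasFDerivAt.comp z h2, ?_, ?_⟩ <;>
    simp [h1, hI]

def P (a b c : ℕ) : ℂ → ℂ := fun z => z ^ a * ((starRingEnd ℂ) z) ^ b * ψ z ^ c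

lemma diff_Lfun (z : ℂ) : DifferentiableAt ℝ Lfun z := by
  obtain ⟨M, hM, -, -⟩ := hasFDerivAt_Lfun z
  exact hM.differentiableAt

lemma wdb_Lfun (z : ℂ) : wdb Lfun z = P 1 0 1 z := by
  obtain ⟨M, hM, h1, hI⟩ := hasFDerivAt_Lfun z
  rw [wdb_def, wgen_hasFDerivAt hM, h1, hI]
  calc ((((1 + Complex.normSq z)⁻¹ * (2*z.re) : ℝ) : ℂ)
        + Complex.I * (((1 + Complex.normSq z)⁻¹ * (2*z.im) : ℝ) : ℂ)) / 2
      = (((1 + Complex.normSq z)⁻¹ : ℝ) : ℂ) * ((z.re:ℂ) + (z.im:ℂ)*Complex.I) := by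
        push_cast; ring
    _ = (((1 + Complex.normSq z)⁻¹ : ℝ) : ℂ) * z := by rw [Complex.re_add_im]
    _ = P 1 0 1 z := by simp only [P, ψ, pow_one, pow_zero, mul_one, one_mul]; ring

lemma diff_P (a b c : ℕ) (z : ℂ) : DifferentiableAt ℝ (P a b c) z := by
  have d1 : DifferentiableAt ℝ (fun w : ℂ => w ^ a) z :=
    ((differentiableAt_pow (𝕜 := ℂ) a).restrictScalars ℝ)
  have d2 : DifferentiableAt ℝ (fun w : ℂ => ((starRingEnd ℂ) w) ^ b) z :=
    (diff_conj_comp differentiableAt_id).pow b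
  have d3 : DifferentiableAt ℝ (fun w : ℂ => ψ w ^ c) z := (diff_psi z).pow c
  exact (d1.mul d2).mul d3

lemma wgen_P_expand (e : ℂ) (a b c : ℕ) (z : ℂ) :
    wgen e (P a b c) z
      = wgen e (fun w => w^a) z * ((starRingEnd ℂ) z)^b * ψ z^c
        + z^a * wgen e (fun w => ((starRingEnd ℂ) w)^b) z * ψ z^c
        + z^a * ((starRingEnd ℂ) z)^b * wgen e (fun w => ψ w^c) z := by
  have d1 : DifferentiableAt ℝ (fun w : ℂ => w ^ a) z :=
    ((differentiableAt_pow (𝕜 := ℂ) a).restrictScalars ℝ)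
  have d2 : DifferentiableAt ℝ (fun w : ℂ => ((starRingEnd ℂ) w) ^ b) z :=
    (diff_conj_comp differentiableAt_id).pow b
  have d3 : DifferentiableAt ℝ (fun w : ℂ => ψ w ^ c) z := (diff_psi z).pow c
  rw [show P a b c = fun w => (w^a * ((starRingEnd ℂ) w)^b) * ψ w^c from rfl,
    wgen_mul (d1.fun_mul d2) d3, wgen_mul d1 d2]
  ring

lemma wd_pow_self (a : ℕ) (z : ℂ) : wd (fun w : ℂ => w^a) z = (a:ℂ) * z^(a-1) := by
  rw [wd_eq_deriv (differentiableAt_pow a), deriv_pow_field]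

lemma wdb_pow_self (a : ℕ) (z : ℂ) : wdb (fun w : ℂ => w^a) z = 0 :=
  wdb_eq_zero (differentiableAt_pow a)

lemma diff_conj_self (z : ℂ) : DifferentiableAt ℝ (fun w : ℂ => (starRingEnd ℂ) w) z :=
  (diff_conj_comp differentiableAt_id : _)

lemma wd_conj_pow (b : ℕ) (z : ℂ) : wd (fun w : ℂ => ((starRingEnd ℂ) w)^b) z = 0 := by
  have h0 : wd (fun w : ℂ => (starRingEnd ℂ) w) z = 0 :=
    (wd_conj_comp differentiableAt_id : _)
  rw [wd_def, wgen_pow (diff_conj_self z) b, ← wd_def, h0]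
  ring

lemma wdb_conj_pow (b : ℕ) (z : ℂ) :
    wdb (fun w : ℂ => ((starRingEnd ℂ) w)^b) z = (b:ℂ) * ((starRingEnd ℂ) z)^(b-1) := by
  have h1 : wdb (fun w : ℂ => (starRingEnd ℂ) w) z = 1 := by
    have := (wdb_conj_comp differentiableAt_id : wdb (fun w : ℂ => (starRingEnd ℂ) w) z
      = (starRingEnd ℂ) (deriv id z))
    simpa using this
  rw [wdb_def, wgen_pow (diff_conj_self z) b, ← wdb_def, h1]
  ring

lemma wd_psi_pow (c : ℕ) (z : ℂ) :
    wd (fun w : ℂ => ψ w^c) z = (c:ℂ) * ψ z^(c-1) * (-((starRingEnd ℂ) z) * ψ z^2) := by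
  rw [wd_def, wgen_pow (diff_psi z) c, ← wd_def, wd_psi]

lemma wdb_psi_pow (c : ℕ) (z : ℂ) :
    wdb (fun w : ℂ => ψ w^c) z = (c:ℂ) * ψ z^(c-1) * (-z * ψ z^2) := by
  rw [wdb_def, wgen_pow (diff_psi z) c, ← wdb_def, wdb_psi]

lemma wd_P (a b c : ℕ) (z : ℂ) :
    wd (P a b c) z = (a:ℂ) * P (a-1) b c z - (c:ℂ) * P a (b+1) (c+1) z := by
  rw [wd_def, wgen_P_expand, ← wd_def, wd_pow_self, wd_conj_pow, wd_psi_pow]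
  simp only [P]
  cases c with
  | zero => simp; ring
  | succ c' =>
      simp only [Nat.add_sub_cancel]
      push_cast
      ring

lemma wdb_P (a b c : ℕ) (z : ℂ) :
    wdb (P a b c) z = (b:ℂ) * P a (b-1) c z - (c:ℂ) * P (a+1) b (c+1) z := by
  rw [wdb_def, wgen_P_expand, ← wdb_def, wdb_pow_self, wdb_conj_pow, wdb_psi_pow]
  simp only [P]
  cases c with
  | zero => simp; ring
  | succ c' =>
      simp only [Nat.add_sub_cancel]
      push_cast
      ring



/-- the submodule of functions spanned by `P a b c` with `b ≥ 1`. -/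
def V : Submodule ℂ (ℂ → ℂ) := Submodule.span ℂ {f | ∃ a b c, f = P a (b+1) c}

lemma wd_funext_add {f g : ℂ → ℂ} (hf : Differentiable ℝ f) (hg : Differentiable ℝ g) :
    wd (f + g) = wd f + wd g := by
  funext z; exact wgen_add (hf z) (hg z)

lemma wd_funext_smul {c : ℂ} {f : ℂ → ℂ} (hf : Differentiable ℝ f) :
    wd (c • f) = c • wd f := by
  funext z; exact wgen_smul (hf z)

lemma V_main : ∀ f ∈ V, Differentiable ℝ f ∧ wd f ∈ V ∧ f 0 = 0 := by
  intro f hf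
  induction hf using Submodule.span_induction with
  | mem f hfm =>
      obtain ⟨a, b, c, rfl⟩ := hfm
      refine ⟨fun z => diff_P a (b+1) c z, ?_, by simp [P]⟩
      have hw : wd (P a (b+1) c)
          = (a:ℂ) • P (a-1) (b+1) c + (-(c:ℂ)) • P a (b+2) (c+1) := by
        funext z
        simp only [Pi.add_apply, Pi.smul_apply, smul_eq_mul, wd_P]
        ring
      rw [hw]
      exact Submodule.add_mem _
        (Submodule.smul_mem _ _ (Submodule.subset_span ⟨a-1, b, c, rfl⟩))
        (Submodule.smul_mem _ _ (Submodule.subset_span ⟨a, b+1, c+1, rfl⟩))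
  | zero =>
      refine ⟨differentiable_const 0, ?_, rfl⟩
      have : wd (0 : ℂ → ℂ) = 0 := by funext z; exact wgen_zero
      rw [this]; exact Submodule.zero_mem _
  | add f g hfm hgm ihf ihg =>
      obtain ⟨hfd, hfw, hf0⟩ := ihf
      obtain ⟨hgd, hgw, hg0⟩ := ihg
      refine ⟨hfd.add hgd, ?_, by simp [hf0, hg0]⟩
      rw [wd_funext_add hfd hgd]
      exact Submodule.add_mem _ hfw hgw
  | smul c f hfm ihf =>
      obtain ⟨hfd, hfw, hf0⟩ := ihf
      refine ⟨hfd.const_smul c, ?_, by simp [hf0]⟩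
      rw [wd_funext_smul hfd]
      exact Submodule.smul_mem _ _ hfw

lemma wd_iter_P (m n : ℕ) : ∃ g, g ∈ V ∧
    wd^[m] (P n 0 n) = fun z => ((n.descFactorial m : ℕ) : ℂ) * P (n - m) 0 n z + g z := by
  induction m with
  | zero =>
      exact ⟨0, Submodule.zero_mem _, by funext z; simp⟩
  | succ m ih =>
      obtain ⟨g, hgV, heq⟩ := ih
      obtain ⟨hgd, hgw, -⟩ := V_main g hgV
      set C : ℂ := ((n.descFactorial m : ℕ) : ℂ) with hC
      have hstep : wd^[m+1] (P n 0 n) = wd (wd^[m] (P n 0 n)) :=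
        Function.iterate_succ_apply' wd m (P n 0 n)
      have hsplit : wd^[m] (P n 0 n) = C • P (n - m) 0 n + g := by
        rw [heq]; funext z; simp [smul_eq_mul]
      have dP : Differentiable ℝ (P (n - m) 0 n) := fun z => diff_P _ _ _ z
      have hD : Differentiable ℝ (C • P (n - m) 0 n) := dP.const_smul C
      refine ⟨(-(C * (n:ℂ))) • P (n - m) (0+1) (n+1) + wd g, ?_, ?_⟩
      · exact Submodule.add_mem _
          (Submodule.smul_mem _ _ (Submodule.subset_span ⟨n - m, 0, n+1, rfl⟩)) hgw
      · rw [hstep, hsplit,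
          wd_funext_add hD hgd,
          wd_funext_smul dP]
        funext z
        simp only [Pi.add_apply, Pi.smul_apply, smul_eq_mul, wd_P]
        have hd : ((n.descFactorial (m+1) : ℕ) : ℂ) = C * ((n - m : ℕ) : ℂ) := by
          rw [hC, Nat.descFactorial_succ]
          push_cast
          ring
        rw [hd, Nat.sub_sub]
        ring

lemma wd_iter_P_diff (m n : ℕ) : Differentiable ℝ (wd^[m] (P n 0 n)) := by
  obtain ⟨g, hgV, hequ⟩ := wd_iter_P m n
  obtain ⟨hgd, -, -⟩ := V_main g hgV
  rw [hequ]
  have dP : Differentiable ℝ (P (n - m) 0 n) := fun z => diff_P _ _ _ z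
  exact (dP.const_mul _).add hgd

lemma psi_zero : ψ 0 = 1 := by simp [ψ]

lemma wd_iter_P_at_zero (m n : ℕ) :
    wd^[m] (P n 0 n) 0 = if m = n then (Nat.factorial n : ℂ) else 0 := by
  obtain ⟨g, hgV, hequ⟩ := wd_iter_P m n
  obtain ⟨-, -, hg0⟩ := V_main g hgV
  rw [hequ]
  simp only [hg0, add_zero]
  rcases lt_trichotomy m n with hlt | heq | hgt
  · have h1 : n - m ≠ 0 := Nat.sub_ne_zero_of_lt hlt
    simp [P, zero_pow h1, if_neg (Nat.ne_of_lt hlt)]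
  · subst heq
    simp [P, psi_zero, Nat.descFactorial_self]
  · have h1 : n.descFactorial m = 0 := Nat.descFactorial_eq_zero_iff_lt.mpr hgt
    simp [h1, if_neg (Nat.ne_of_gt hgt)]

lemma wd_iter_const_mul (c : ℂ) (n : ℕ) : ∀ m,
    wd^[m] (c • P n 0 n) = c • wd^[m] (P n 0 n) := by
  intro m
  induction m with
  | zero => rfl
  | succ m ih =>
      rw [Function.iterate_succ_apply' wd m, Function.iterate_succ_apply' wd m, ih,
        wd_funext_smul (wd_iter_P_diff m n)]

lemma wdb_iter_Lfun (n : ℕ) :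
    wdb^[n+1] Lfun = ((-1:ℂ)^n * (Nat.factorial n : ℂ)) • P (n+1) 0 (n+1) := by
  induction n with
  | zero =>
      funext z
      simp only [zero_add, Function.iterate_one, Pi.smul_apply, smul_eq_mul]
      rw [wdb_Lfun z]
      simp
  | succ n ih =>
      rw [Function.iterate_succ_apply' wdb (n+1), ih]
      funext z
      rw [show wdb (((-1:ℂ)^n * (Nat.factorial n : ℂ)) • P (n+1) 0 (n+1)) z
          = ((-1:ℂ)^n * (Nat.factorial n : ℂ)) * wdb (P (n+1) 0 (n+1)) z from
          wgen_smul (diff_P (n+1) 0 (n+1) z), wdb_P]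
      simp only [Pi.smul_apply, smul_eq_mul]
      rw [Nat.factorial_succ]
      push_cast
      ring

lemma main_diag (m n : ℕ) :
    wd^[m+1] (wdb^[n+1] Lfun) 0
      = if m = n then (-1:ℂ)^n * (Nat.factorial n : ℂ) * (Nat.factorial (n+1) : ℂ) else 0 := by
  rw [wdb_iter_Lfun n, wd_iter_const_mul]
  simp only [Pi.smul_apply, smul_eq_mul]
  rw [wd_iter_P_at_zero (m+1) (n+1)]
  by_cases h : m = n
  · subst h; simp
  · simp [h, fun hc : m + 1 = n + 1 => h (Nat.succ_injective hc)]



lemma wgen_sub {e : ℂ} {f g : ℂ → ℂ} {z : ℂ} (hf : DifferentiableAt ℝ f z)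
    (hg : DifferentiableAt ℝ g z) :
    wgen e (fun w => f w - g w) z = wgen e f z - wgen e g z := by
  rw [wgen_hasFDerivAt (hf.hasFDerivAt.fun_sub hg.hasFDerivAt), wgen, wgen]
  simp only [ContinuousLinearMap.sub_apply]
  ring

lemma wgen_finset_sum {e : ℂ} {ι : Type} (s : Finset ι) (F : ι → ℂ → ℂ) {z : ℂ}
    (hF : ∀ i ∈ s, DifferentiableAt ℝ (F i) z) :
    wgen e (fun w => ∑ i ∈ s, F i w) z = ∑ i ∈ s, wgen e (F i) z := by
  have hs : HasFDerivAt (fun w => ∑ i ∈ s, F i w) (∑ i ∈ s, fderiv ℝ (F i) z) z :=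
    HasFDerivAt.fun_sum fun i hi => (hF i hi).hasFDerivAt
  rw [wgen_hasFDerivAt hs]
  simp only [ContinuousLinearMap.coe_sum', Finset.sum_apply, wgen]
  rw [Finset.mul_sum, ← Finset.sum_add_distrib, ← Finset.sum_div]

lemma wdb_mul_conj {F G : ℂ → ℂ} {z : ℂ} (hF : DifferentiableAt ℂ F z)
    (hG : DifferentiableAt ℂ G z) :
    wdb (fun w => F w * (starRingEnd ℂ) (G w)) z = F z * (starRingEnd ℂ) (deriv G z) := by
  have dF : DifferentiableAt ℝ F z := hF.restrictScalars ℝ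
  have dG : DifferentiableAt ℝ (fun w => (starRingEnd ℂ) (G w)) z :=
    diff_conj_comp (hG.restrictScalars ℝ)
  rw [show wdb (fun w => F w * (starRingEnd ℂ) (G w)) z
      = wgen Complex.I (fun w => F w * (starRingEnd ℂ) (G w)) z from rfl,
    wgen_mul dF dG,
    show wgen Complex.I F z = wdb F z from rfl, wdb_eq_zero hF,
    show wgen Complex.I (fun w => (starRingEnd ℂ) (G w)) z
      = wdb (fun w => (starRingEnd ℂ) (G w)) z from rfl, wdb_conj_comp hG]
  ring

lemma wd_mul_conj {F G : ℂ → ℂ} {z : ℂ} (hF : DifferentiableAt ℂ F z)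
    (hG : DifferentiableAt ℂ G z) :
    wd (fun w => F w * (starRingEnd ℂ) (G w)) z = deriv F z * (starRingEnd ℂ) (G z) := by
  have dF : DifferentiableAt ℝ F z := hF.restrictScalars ℝ
  have dG : DifferentiableAt ℝ (fun w => (starRingEnd ℂ) (G w)) z :=
    diff_conj_comp (hG.restrictScalars ℝ)
  rw [show wd (fun w => F w * (starRingEnd ℂ) (G w)) z
      = wgen (-Complex.I) (fun w => F w * (starRingEnd ℂ) (G w)) z from rfl,
    wgen_mul dF dG,
    show wgen (-Complex.I) F z = wd F z from rfl, wd_eq_deriv hF,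
    show wgen (-Complex.I) (fun w => (starRingEnd ℂ) (G w)) z
      = wd (fun w => (starRingEnd ℂ) (G w)) z from rfl, wd_conj_comp hG]
  ring



section Key

open Matrix

lemma wd_eqOn {Ω : Set ℂ} (hΩ : IsOpen Ω) {f g : ℂ → ℂ} (hfg : ∀ w ∈ Ω, f w = g w)
    {z : ℂ} (hz : z ∈ Ω) : wd f z = wd g z :=
  wgen_congr (Filter.eventuallyEq_of_mem (hΩ.mem_nhds hz) hfg)

lemma wdb_eqOn {Ω : Set ℂ} (hΩ : IsOpen Ω) {f g : ℂ → ℂ} (hfg : ∀ w ∈ Ω, f w = g w)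
    {z : ℂ} (hz : z ∈ Ω) : wdb f z = wdb g z :=
  wgen_congr (Filter.eventuallyEq_of_mem (hΩ.mem_nhds hz) hfg)

lemma wd_iter_eqOn {Ω : Set ℂ} (hΩ : IsOpen Ω) (q : ℕ) {f g : ℂ → ℂ}
    (hfg : ∀ w ∈ Ω, f w = g w) :
    ∀ z ∈ Ω, wd^[q] f z = wd^[q] g z := by
  induction q with
  | zero => exact hfg
  | succ q ih =>
      intro z hz
      rw [Function.iterate_succ_apply' wd q f, Function.iterate_succ_apply' wd q g]
      exact wd_eqOn hΩ ih hz

lemma wdb_iter_eqOn {Ω : Set ℂ} (hΩ : IsOpen Ω) (q : ℕ) {f g : ℂ → ℂ}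
    (hfg : ∀ w ∈ Ω, f w = g w) :
    ∀ z ∈ Ω, wdb^[q] f z = wdb^[q] g z := by
  induction q with
  | zero => exact hfg
  | succ q ih =>
      intro z hz
      rw [Function.iterate_succ_apply' wdb q f, Function.iterate_succ_apply' wdb q g]
      exact wdb_eqOn hΩ ih hz

lemma key {Ω : Set ℂ} (hΩ : IsOpen Ω) (r s : ℕ) (h : Fin r → ℂ → ℂ) (k : Fin s → ℂ → ℂ)
    (h0 : (0:ℂ) ∈ Ω)
    (hh : ∀ σ, DifferentiableOn ℂ (h σ) Ω) (hk : ∀ τ, DifferentiableOn ℂ (k τ) Ω)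
    (hid : ∀ z ∈ Ω, Real.log (1 + ‖z‖ ^ 2)
      = ∑ σ, ‖h σ z‖ ^ 2 - ∑ τ, ‖k τ z‖ ^ 2) : False := by
  classical
  -- iterated complex derivatives
  set Dh : ℕ → Fin r → ℂ → ℂ := fun i σ => deriv^[i] (h σ) with hDh_def
  set Dk : ℕ → Fin s → ℂ → ℂ := fun i τ => deriv^[i] (k τ) with hDk_def
  have hDh : ∀ i σ, DifferentiableOn ℂ (Dh i σ) Ω := by
    intro i
    induction i with
    | zero => exact fun σ => hh σ
    | succ i ih =>
        intro σ
        have : Dh (i+1) σ = deriv (Dh i σ) := Function.iterate_succ_apply' deriv i (h σ)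
        rw [this]
        exact (((ih σ).analyticOnNhd hΩ).deriv).differentiableOn
  have hDk : ∀ i τ, DifferentiableOn ℂ (Dk i τ) Ω := by
    intro i
    induction i with
    | zero => exact fun τ => hk τ
    | succ i ih =>
        intro τ
        have : Dk (i+1) τ = deriv (Dk i τ) := Function.iterate_succ_apply' deriv i (k τ)
        rw [this]
        exact (((ih τ).analyticOnNhd hΩ).deriv).differentiableOn
  have hDhAt : ∀ i σ {z}, z ∈ Ω → DifferentiableAt ℂ (Dh i σ) z :=
    fun i σ z hz => (hDh i σ).differentiableAt (hΩ.mem_nhds hz)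
  have hDkAt : ∀ i τ {z}, z ∈ Ω → DifferentiableAt ℂ (Dk i τ) z :=
    fun i τ z hz => (hDk i τ).differentiableAt (hΩ.mem_nhds hz)
  have hDh_succ : ∀ i σ {z : ℂ}, z ∈ Ω → deriv (Dh i σ) z = Dh (i+1) σ z := by
    intro i σ z _
    rw [show Dh (i+1) σ = deriv (Dh i σ) from Function.iterate_succ_apply' deriv i (h σ)]
  have hDk_succ : ∀ i τ {z : ℂ}, z ∈ Ω → deriv (Dk i τ) z = Dk (i+1) τ z := by
    intro i τ z _
    rw [show Dk (i+1) τ = deriv (Dk i τ) from Function.iterate_succ_apply' deriv i (k τ)]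
  -- the T functions
  set T : ℕ → ℕ → ℂ → ℂ := fun m n z =>
    (∑ σ, Dh m σ z * (starRingEnd ℂ) (Dh n σ z))
      - ∑ τ, Dk m τ z * (starRingEnd ℂ) (Dk n τ z) with hT_def
  have hTdiff : ∀ m n {z : ℂ}, z ∈ Ω → DifferentiableAt ℝ (T m n) z := by
    intro m n z hz
    apply DifferentiableAt.sub
    · exact DifferentiableAt.fun_sum fun σ _ =>
        ((hDhAt m σ hz).restrictScalars ℝ).fun_mul
          (diff_conj_comp ((hDhAt n σ hz).restrictScalars ℝ))
    · exact DifferentiableAt.fun_sum fun τ _ =>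
        ((hDkAt m τ hz).restrictScalars ℝ).fun_mul
          (diff_conj_comp ((hDkAt n τ hz).restrictScalars ℝ))
  have hwdbT : ∀ m n {z : ℂ}, z ∈ Ω → wdb (T m n) z = T m (n+1) z := by
    intro m n z hz
    have e1 : wdb (T m n) z
        = wdb (fun w => ∑ σ, Dh m σ w * (starRingEnd ℂ) (Dh n σ w)) z
          - wdb (fun w => ∑ τ, Dk m τ w * (starRingEnd ℂ) (Dk n τ w)) z :=
      wgen_sub
        (DifferentiableAt.fun_sum fun σ _ =>
          ((hDhAt m σ hz).restrictScalars ℝ).fun_mul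
            (diff_conj_comp ((hDhAt n σ hz).restrictScalars ℝ)))
        (DifferentiableAt.fun_sum fun τ _ =>
          ((hDkAt m τ hz).restrictScalars ℝ).fun_mul
            (diff_conj_comp ((hDkAt n τ hz).restrictScalars ℝ)))
    have e2 : wdb (fun w => ∑ σ, Dh m σ w * (starRingEnd ℂ) (Dh n σ w)) z
        = ∑ σ, Dh m σ z * (starRingEnd ℂ) (Dh (n+1) σ z) := by
      show wgen Complex.I _ z = _
      rw [wgen_finset_sum Finset.univ _ (fun σ _ =>
        ((hDhAt m σ hz).restrictScalars ℝ).fun_mul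
          (diff_conj_comp ((hDhAt n σ hz).restrictScalars ℝ)))]
      refine Finset.sum_congr rfl fun σ _ => ?_
      rw [show wgen Complex.I (fun w => Dh m σ w * (starRingEnd ℂ) (Dh n σ w)) z
        = wdb (fun w => Dh m σ w * (starRingEnd ℂ) (Dh n σ w)) z from rfl,
        wdb_mul_conj (hDhAt m σ hz) (hDhAt n σ hz), hDh_succ n σ hz]
    have e3 : wdb (fun w => ∑ τ, Dk m τ w * (starRingEnd ℂ) (Dk n τ w)) z
        = ∑ τ, Dk m τ z * (starRingEnd ℂ) (Dk (n+1) τ z) := by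
      show wgen Complex.I _ z = _
      rw [wgen_finset_sum Finset.univ _ (fun τ _ =>
        ((hDkAt m τ hz).restrictScalars ℝ).fun_mul
          (diff_conj_comp ((hDkAt n τ hz).restrictScalars ℝ)))]
      refine Finset.sum_congr rfl fun τ _ => ?_
      rw [show wgen Complex.I (fun w => Dk m τ w * (starRingEnd ℂ) (Dk n τ w)) z
        = wdb (fun w => Dk m τ w * (starRingEnd ℂ) (Dk n τ w)) z from rfl,
        wdb_mul_conj (hDkAt m τ hz) (hDkAt n τ hz), hDk_succ n τ hz]
    rw [show T m n = fun w => (∑ σ, Dh m σ w * (starRingEnd ℂ) (Dh n σ w))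
      - ∑ τ, Dk m τ w * (starRingEnd ℂ) (Dk n τ w) from rfl] at e1 ⊢
    rw [e1, e2, e3]
  have hwdT : ∀ m n {z : ℂ}, z ∈ Ω → wd (T m n) z = T (m+1) n z := by
    intro m n z hz
    have e1 : wd (T m n) z
        = wd (fun w => ∑ σ, Dh m σ w * (starRingEnd ℂ) (Dh n σ w)) z
          - wd (fun w => ∑ τ, Dk m τ w * (starRingEnd ℂ) (Dk n τ w)) z :=
      wgen_sub
        (DifferentiableAt.fun_sum fun σ _ =>
          ((hDhAt m σ hz).restrictScalars ℝ).fun_mul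
            (diff_conj_comp ((hDhAt n σ hz).restrictScalars ℝ)))
        (DifferentiableAt.fun_sum fun τ _ =>
          ((hDkAt m τ hz).restrictScalars ℝ).fun_mul
            (diff_conj_comp ((hDkAt n τ hz).restrictScalars ℝ)))
    have e2 : wd (fun w => ∑ σ, Dh m σ w * (starRingEnd ℂ) (Dh n σ w)) z
        = ∑ σ, Dh (m+1) σ z * (starRingEnd ℂ) (Dh n σ z) := by
      show wgen (-Complex.I) _ z = _
      rw [wgen_finset_sum Finset.univ _ (fun σ _ =>
        ((hDhAt m σ hz).restrictScalars ℝ).fun_mul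
          (diff_conj_comp ((hDhAt n σ hz).restrictScalars ℝ)))]
      refine Finset.sum_congr rfl fun σ _ => ?_
      rw [show wgen (-Complex.I) (fun w => Dh m σ w * (starRingEnd ℂ) (Dh n σ w)) z
        = wd (fun w => Dh m σ w * (starRingEnd ℂ) (Dh n σ w)) z from rfl,
        wd_mul_conj (hDhAt m σ hz) (hDhAt n σ hz), hDh_succ m σ hz]
    have e3 : wd (fun w => ∑ τ, Dk m τ w * (starRingEnd ℂ) (Dk n τ w)) z
        = ∑ τ, Dk (m+1) τ z * (starRingEnd ℂ) (Dk n τ z) := by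
      show wgen (-Complex.I) _ z = _
      rw [wgen_finset_sum Finset.univ _ (fun τ _ =>
        ((hDkAt m τ hz).restrictScalars ℝ).fun_mul
          (diff_conj_comp ((hDkAt n τ hz).restrictScalars ℝ)))]
      refine Finset.sum_congr rfl fun τ _ => ?_
      rw [show wgen (-Complex.I) (fun w => Dk m τ w * (starRingEnd ℂ) (Dk n τ w)) z
        = wd (fun w => Dk m τ w * (starRingEnd ℂ) (Dk n τ w)) z from rfl,
        wd_mul_conj (hDkAt m τ hz) (hDkAt n τ hz), hDk_succ m τ hz]
    rw [show T m n = fun w => (∑ σ, Dh m σ w * (starRingEnd ℂ) (Dh n σ w))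
      - ∑ τ, Dk m τ w * (starRingEnd ℂ) (Dk n τ w) from rfl] at e1 ⊢
    rw [e1, e2, e3]
  -- Lfun agrees with T 0 0 on Ω
  have hLT : ∀ z ∈ Ω, Lfun z = T 0 0 z := by
    intro z hz
    have hid' := hid z hz
    simp only [Complex.sq_norm] at hid'
    rw [hT_def]
    simp only [hDh_def, hDk_def, Function.iterate_zero_apply]
    rw [Lfun, hid']
    push_cast
    congr 1
    · exact Finset.sum_congr rfl fun σ _ => (Complex.mul_conj _).symm
    · exact Finset.sum_congr rfl fun τ _ => (Complex.mul_conj _).symm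
  -- iterated derivatives of T 0 0 on Ω
  have hiter1 : ∀ n, ∀ z ∈ Ω, wdb^[n] (T 0 0) z = T 0 n z := by
    intro n
    induction n with
    | zero => exact fun z _ => rfl
    | succ n ih =>
        intro z hz
        rw [Function.iterate_succ_apply' wdb n (T 0 0), wdb_eqOn hΩ ih hz]
        exact hwdbT 0 n hz
  have hiter2 : ∀ n m, ∀ z ∈ Ω, wd^[m] (wdb^[n] (T 0 0)) z = T m n z := by
    intro n m
    induction m with
    | zero => exact hiter1 n
    | succ m ih =>
        intro z hz
        rw [Function.iterate_succ_apply' wd m, wd_eqOn hΩ ih hz]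
        exact hwdT m n hz
  -- the matrix
  set N : ℕ := r + s + 1 with hN
  set d : Fin N → ℂ := fun n =>
    (-1:ℂ)^(n:ℕ) * (Nat.factorial (n:ℕ) : ℂ) * (Nat.factorial ((n:ℕ)+1) : ℂ) with hd
  set B : Matrix (Fin N) (Fin N) ℂ :=
    fun m n => wd^[(m:ℕ)+1] (wdb^[(n:ℕ)+1] Lfun) 0 with hB
  have hBdiag : B = Matrix.diagonal d := by
    ext m n
    have hBmn : B m n = wd^[(m:ℕ)+1] (wdb^[(n:ℕ)+1] Lfun) 0 := rfl
    rw [hBmn, main_diag (m:ℕ) (n:ℕ), Matrix.diagonal_apply, hd]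
    by_cases hmn : m = n
    · subst hmn; simp
    · rw [if_neg (fun hc : (m:ℕ) = (n:ℕ) => hmn (Fin.ext hc)), if_neg hmn]
  have hdet : B.det ≠ 0 := by
    rw [hBdiag, Matrix.det_diagonal]
    refine Finset.prod_ne_zero_iff.mpr fun i _ => ?_
    rw [hd]
    refine mul_ne_zero (mul_ne_zero (pow_ne_zero _ (by norm_num)) ?_) ?_ <;>
      exact Nat.cast_ne_zero.mpr (Nat.factorial_ne_zero _)
  have hrank_full : B.rank = N := by
    have : IsUnit B := (Matrix.isUnit_iff_isUnit_det B).mpr (isUnit_iff_ne_zero.mpr hdet)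
    simpa using Matrix.rank_of_isUnit B this
  -- B entries from the T side
  have hBT : ∀ m n : Fin N, B m n = T ((m:ℕ)+1) ((n:ℕ)+1) 0 := by
    intro m n
    have hBmn : B m n = wd^[(m:ℕ)+1] (wdb^[(n:ℕ)+1] Lfun) 0 := rfl
    have h1 : ∀ z ∈ Ω, wdb^[(n:ℕ)+1] Lfun z = wdb^[(n:ℕ)+1] (T 0 0) z :=
      wdb_iter_eqOn hΩ _ hLT
    rw [hBmn, wd_iter_eqOn hΩ ((m:ℕ)+1) h1 0 h0]
    exact hiter2 ((n:ℕ)+1) ((m:ℕ)+1) 0 h0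
  -- factor B
  set Mh : Matrix (Fin N) (Fin r) ℂ := fun m σ => Dh ((m:ℕ)+1) σ 0 with hMh
  set Mk : Matrix (Fin N) (Fin s) ℂ := fun m τ => Dk ((m:ℕ)+1) τ 0 with hMk
  have hfact : B = Matrix.fromCols Mh Mk * Matrix.fromRows Mhᴴ (-(Mkᴴ)) := by
    rw [Matrix.fromCols_mul_fromRows]
    ext m n
    rw [hBT m n, hT_def]
    simp only [Matrix.add_apply, Matrix.mul_apply, Matrix.conjTranspose_apply,
      Matrix.neg_apply, hMh, hMk]
    rw [sub_eq_add_neg, ← Finset.sum_neg_distrib]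
    congr 1
    exact Finset.sum_congr rfl fun τ _ => (mul_neg _ _).symm
  have hrank_le : B.rank ≤ r + s := by
    rw [hfact]
    calc (Matrix.fromCols Mh Mk * Matrix.fromRows Mhᴴ (-(Mkᴴ))).rank
        ≤ (Matrix.fromCols Mh Mk).rank := Matrix.rank_mul_le_left _ _
      _ ≤ Fintype.card (Fin r ⊕ Fin s) := Matrix.rank_le_card_width _
      _ = r + s := by simp
  rw [hrank_full] at hrank_le
  omega

end Key


end Stmt5

set_option maxHeartbeats 1000000 in
/-- `log(1+|z|²)` is not a difference of finite sums of squared moduli of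
holomorphic functions. -/
theorem stmt_5 : ¬ ∃ (r s : ℕ) (h : Fin r → ℂ → ℂ) (k : Fin s → ℂ → ℂ) (U : Set ℂ),
    IsOpen U ∧ U.Nonempty ∧
    (∀ σ, DifferentiableOn ℂ (h σ) U) ∧ (∀ τ, DifferentiableOn ℂ (k τ) U) ∧
    ∀ z ∈ U, Real.log (1 + ‖z‖ ^ 2)
      = ∑ σ, ‖h σ z‖ ^ 2 - ∑ τ, ‖k τ z‖ ^ 2 := by
  rintro ⟨r, s, h, k, U, hU, ⟨a, haU⟩, hh, hk, hid⟩
  classical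
  set C : ℝ := Real.log (1 + Complex.normSq a) with hC
  set φ : ℂ → ℂ := fun z => (z + a) / (1 - (starRingEnd ℂ) a * z) with hφ
  set g : ℂ → ℂ := fun z => Complex.log (1 - (starRingEnd ℂ) a * z) with hg
  set u : ℂ → ℂ := fun z => g z - ((C/2 : ℝ) : ℂ) with hu
  set S₁ : Set ℂ := {z | ‖(starRingEnd ℂ) a * z‖ < 1/2} with hS₁
  have hS₁open : IsOpen S₁ := by
    have : S₁ = (fun z => ‖(starRingEnd ℂ) a * z‖) ⁻¹' (Set.Iio (1/2)) := rfl
    rw [this]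
    exact (continuous_norm.comp (continuous_const.mul continuous_id)).isOpen_preimage
      _ isOpen_Iio
  have hdenne : ∀ z ∈ S₁, 1 - (starRingEnd ℂ) a * z ≠ 0 := by
    intro z hz hc
    rw [sub_eq_zero] at hc
    have h1 : ‖(starRingEnd ℂ) a * z‖ < 1/2 := hz
    have h2 : ‖(starRingEnd ℂ) a * z‖ = 1 := by rw [← hc]; simp
    rw [h2] at h1
    norm_num at h1
  have hφcont : ContinuousOn φ S₁ := by
    apply ContinuousOn.div
    · exact (continuous_id.add continuous_const).continuousOn
    · exact (continuous_const.sub (continuous_const.mul continuous_id)).continuousOn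
    · exact hdenne
  set Ω : Set ℂ := S₁ ∩ φ ⁻¹' U with hΩdef
  have hΩopen : IsOpen Ω := hφcont.isOpen_inter_preimage hS₁open hU
  have h0Ω : (0:ℂ) ∈ Ω := by
    constructor
    · show ‖(starRingEnd ℂ) a * 0‖ < 1/2
      simp
    · show φ 0 ∈ U
      simp only [hφ, mul_zero, sub_zero, zero_add, div_one]
      exact haU
  have hφmaps : ∀ z ∈ Ω, φ z ∈ U := fun z hz => hz.2
  have hφdiff : DifferentiableOn ℂ φ Ω := by
    apply DifferentiableOn.div
    · exact (differentiable_id.add_const a).differentiableOn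
    · exact ((differentiable_const _).sub ((differentiable_const _).mul
        differentiable_id)).differentiableOn
    · exact fun z hz => hdenne z hz.1
  have hre : ∀ z ∈ S₁, (0:ℝ) < (1 - (starRingEnd ℂ) a * z).re := by
    intro z hz
    have h1 : ((starRingEnd ℂ) a * z).re ≤ ‖(starRingEnd ℂ) a * z‖ :=
      Complex.re_le_norm _
    have h2 : ‖(starRingEnd ℂ) a * z‖ < 1/2 := hz
    simp only [Complex.sub_re, Complex.one_re]
    linarith
  have hgdiff : DifferentiableOn ℂ g Ω := by
    intro z hz
    have hinner : DifferentiableAt ℂ (fun w : ℂ => 1 - (starRingEnd ℂ) a * w) z :=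
      (differentiableAt_const _).sub ((differentiableAt_const _).mul differentiableAt_id)
    exact ((Complex.differentiableAt_log (Or.inl (hre z hz.1))).comp z
      hinner).differentiableWithinAt
  have hudiff : DifferentiableOn ℂ u Ω := hgdiff.sub_const _
  -- new families
  set h' : Fin (r+1) → ℂ → ℂ :=
    Fin.cons (fun z => 1 + u z) (fun σ => fun z => h σ (φ z)) with hh'def
  set k' : Fin (s+2) → ℂ → ℂ :=
    Fin.cons u (Fin.cons (fun _ => (1:ℂ)) (fun τ => fun z => k τ (φ z))) with hk'def
  have hh' : ∀ i, DifferentiableOn ℂ (h' i) Ω := by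
    refine Fin.cases ?_ ?_
    · show DifferentiableOn ℂ (fun z => 1 + u z) Ω
      exact DifferentiableOn.const_add 1 hudiff
    · intro σ
      show DifferentiableOn ℂ (fun z => h σ (φ z)) Ω
      exact (hh σ).comp hφdiff hφmaps
  have hk' : ∀ j, DifferentiableOn ℂ (k' j) Ω := by
    refine Fin.cases ?_ ?_
    · exact hudiff
    · refine Fin.cases ?_ ?_
      · show DifferentiableOn ℂ (fun _ => (1:ℂ)) Ω
        exact differentiableOn_const 1
      · intro τ
        show DifferentiableOn ℂ (fun z => k τ (φ z)) Ω
        exact (hk τ).comp hφdiff hφmaps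
  -- the identity on Ω
  have hident : ∀ z ∈ Ω, Real.log (1 + ‖z‖ ^ 2)
      = ∑ i, ‖h' i z‖ ^ 2 - ∑ j, ‖k' j z‖ ^ 2 := by
    intro z hz
    set d : ℂ := 1 - (starRingEnd ℂ) a * z with hd
    have hdne : d ≠ 0 := hdenne z hz.1
    have hnsqd : 0 < Complex.normSq d := Complex.normSq_pos.mpr hdne
    set w : ℂ := φ z with hw
    have hstep1 := hid w (hφmaps z hz)
    -- algebraic identity
    have halg : Complex.normSq d + Complex.normSq (z + a)
        = (1 + Complex.normSq a) * (1 + Complex.normSq z) := by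
      have hcx : ((Complex.normSq d + Complex.normSq (z + a) : ℝ) : ℂ)
          = (((1 + Complex.normSq a) * (1 + Complex.normSq z) : ℝ) : ℂ) := by
        push_cast
        rw [← Complex.mul_conj, ← Complex.mul_conj, ← Complex.mul_conj, ← Complex.mul_conj]
        simp only [hd, map_sub, map_add, map_mul, map_one, Complex.conj_conj]
        ring
      exact_mod_cast hcx
    have habsw : 1 + ‖w‖ ^ 2
        = ((1 + Complex.normSq a) * (1 + Complex.normSq z)) / Complex.normSq d := by
      rw [Complex.sq_norm, hw, hφ]
      simp only [← hd]
      rw [show Complex.normSq ((z + a) / d) = Complex.normSq (z+a) / Complex.normSq d from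
        map_div₀ Complex.normSq _ _]
      rw [← halg]
      field_simp
    have hposa : (0:ℝ) < 1 + Complex.normSq a := by have := Complex.normSq_nonneg a; linarith
    have hposz : (0:ℝ) < 1 + Complex.normSq z := by have := Complex.normSq_nonneg z; linarith
    have hlog : Real.log (1 + ‖w‖ ^ 2)
        = C + Real.log (1 + Complex.normSq z) - Real.log (Complex.normSq d) := by
      rw [habsw, Real.log_div (by positivity) (ne_of_gt hnsqd),
        Real.log_mul (ne_of_gt hposa) (ne_of_gt hposz), hC]
    have hlogd : Real.log (Complex.normSq d) = 2 * (g z).re := by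
      have h1 : Complex.normSq d = ‖d‖ ^ 2 := (Complex.sq_norm d).symm
      rw [h1, Real.log_pow]
      have h2 : (g z).re = Real.log (‖d‖) := by
        rw [hg]
        simp only [← hd]
        exact Complex.log_re _
      rw [h2]
      norm_num
    have hure : (u z).re = (g z).re - C/2 := by
      rw [hu]
      simp [Complex.sub_re, Complex.ofReal_re]
    have hnormu : ‖1 + u z‖ ^ 2 - ‖u z‖ ^ 2 = 1 + 2*(u z).re := by
      rw [Complex.sq_norm, Complex.sq_norm, Complex.normSq_apply, Complex.normSq_apply]
      simp only [Complex.add_re, Complex.add_im, Complex.one_re, Complex.one_im]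
      ring
    -- expand the sums
    have hsum1 : ∑ i, ‖h' i z‖ ^ 2
        = ‖1 + u z‖ ^ 2 + ∑ σ, ‖h σ (φ z)‖ ^ 2 := by
      rw [Fin.sum_univ_succ]
      simp [hh'def]
    have hsum2 : ∑ j, ‖k' j z‖ ^ 2
        = ‖u z‖ ^ 2 + (1 + ∑ τ, ‖k τ (φ z)‖ ^ 2) := by
      rw [Fin.sum_univ_succ, Fin.sum_univ_succ]
      simp [hk'def]
    rw [hsum1, hsum2, Complex.sq_norm z]
    have hstep1' : Real.log (1 + ‖w‖ ^ 2)
        = ∑ σ, ‖h σ (φ z)‖ ^ 2 - ∑ τ, ‖k τ (φ z)‖ ^ 2 := by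
      rw [hstep1, hw]
    have hmain : Real.log (1 + Complex.normSq z)
        = Real.log (1 + ‖w‖ ^ 2) - C + 2*(g z).re := by
      rw [hlog, hlogd]; ring
    rw [hmain, hstep1']
    linarith [hnormu, hure]
  exact (Stmt5.key hΩopen (r+1) (s+2) h' k' h0Ω hh' hk' hident).elim
end
end

section
/- Let r be a positive integer and suppose holomorphic functions f₀, f₁, …, f_N on a neighborhood of 0 in ℂ satisfy (1 + |z|²)^r = Σ_{i=0}^N |f_i(z)|² for all z in that neighborhood. Then N ≥ r. -/
open Complex Asymptotics Filter Topology Metric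
set_option maxHeartbeats 1000000

lemma aux_conj_conj_hasDerivAt {f : ℂ → ℂ} {d z : ℂ}
    (h : HasDerivAt f d ((starRingEnd ℂ) z)) :
    HasDerivAt (fun w => (starRingEnd ℂ) (f ((starRingEnd ℂ) w))) ((starRingEnd ℂ) d) z := by
  rw [hasDerivAt_iff_isLittleO] at h ⊢
  have hc : Filter.Tendsto (starRingEnd ℂ) (𝓝 z) (𝓝 ((starRingEnd ℂ) z)) :=
    Complex.continuous_conj.tendsto z
  have h2 := h.comp_tendsto hc
  rw [isLittleO_iff] at h2 ⊢
  intro c hc'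
  filter_upwards [h2 hc'] with w hw
  have e : (starRingEnd ℂ) (f ((starRingEnd ℂ) w)) - (starRingEnd ℂ) (f ((starRingEnd ℂ) z))
      - (w - z) • ((starRingEnd ℂ) d)
      = (starRingEnd ℂ) (f ((starRingEnd ℂ) w) - f ((starRingEnd ℂ) z)
        - ((starRingEnd ℂ) w - (starRingEnd ℂ) z) • d) := by
    simp [map_sub, map_mul, smul_eq_mul]
  rw [e]
  calc ‖(starRingEnd ℂ) (f ((starRingEnd ℂ) w) - f ((starRingEnd ℂ) z)
        - ((starRingEnd ℂ) w - (starRingEnd ℂ) z) • d)‖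
      = ‖f ((starRingEnd ℂ) w) - f ((starRingEnd ℂ) z)
        - ((starRingEnd ℂ) w - (starRingEnd ℂ) z) • d‖ := by
        rw [Complex.norm_conj]
    _ ≤ c * ‖(starRingEnd ℂ) w - (starRingEnd ℂ) z‖ := hw
    _ = c * ‖w - z‖ := by
        rw [← map_sub, Complex.norm_conj]

/-- A representation `(1+|z|²)^r = Σ_{i=0}^N |f_i|²` forces `N ≥ r`. -/
theorem stmt_9 (r : ℕ) (hr : 0 < r) (N : ℕ) (f : Fin (N + 1) → ℂ → ℂ) (U : Set ℂ)
    (hU : IsOpen U) (h0 : (0 : ℂ) ∈ U) (hf : ∀ i, DifferentiableOn ℂ (f i) U)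
    (heq : ∀ z ∈ U, (1 + ‖z‖ ^ 2) ^ r = ∑ i, ‖f i z‖ ^ 2) :
    N ≥ r := by
  -- ε-ball inside U
  obtain ⟨ε, hε, hball⟩ := Metric.isOpen_iff.1 hU 0 h0
  -- the functions g i = conj ∘ f i ∘ conj, holomorphic on the ball
  set g : Fin (N + 1) → ℂ → ℂ := fun i w => (starRingEnd ℂ) (f i ((starRingEnd ℂ) w)) with hg
  have hmem : ∀ z : ℂ, ‖z‖ < ε → z ∈ U := by
    intro z hz
    exact hball (by simpa [Metric.mem_ball, Complex.dist_eq] using hz)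
  have hfd : ∀ (i) (z : ℂ), ‖z‖ < ε → DifferentiableAt ℂ (f i) z := by
    intro i z hz
    exact ((hf i).differentiableAt (hU.mem_nhds (hmem z hz)))
  have hgd : ∀ (i) (z : ℂ), ‖z‖ < ε → DifferentiableAt ℂ (g i) z := by
    intro i z hz
    have h1 : DifferentiableAt ℂ (f i) ((starRingEnd ℂ) z) := by
      refine hfd i _ ?_
      rwa [Complex.norm_conj]
    exact (aux_conj_conj_hasDerivAt h1.hasDerivAt).differentiableAt
  -- base identity on the diagonal
  have hdiag : ∀ z : ℂ, ‖z‖ < ε →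
      (∑ i, f i z * g i ((starRingEnd ℂ) z)) = (1 + z * (starRingEnd ℂ) z) ^ r := by
    intro z hz
    have h1 : ∀ i, f i z * g i ((starRingEnd ℂ) z)
        = ((‖f i z‖ ^ 2 : ℝ) : ℂ) := by
      intro i
      simp only [hg, Complex.conj_conj]
      rw [Complex.mul_conj, Complex.sq_norm]
    rw [Finset.sum_congr rfl fun i _ => h1 i, ← Complex.ofReal_sum,
      ← heq z (hmem z hz)]
    push_cast
    rw [Complex.mul_conj, ← Complex.ofReal_pow, Complex.sq_norm]
  set δ := ε / 2 with hδ
  have hδpos : 0 < δ := by positivity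
  -- the polarized function H
  set F : ℂ → ℂ → ℂ := fun z w => (∑ i, f i z * g i w) - (1 + z * w) ^ r with hF
  -- Step A/B: F vanishes on ball δ × ball δ
  have hδε : δ + δ = ε := by rw [hδ]; ring
  -- real-diagonal vanishing
  have hreal : ∀ x t : ℝ, |x| < δ → |t| < δ →
      F (↑x + Complex.I * ↑t) (↑x - Complex.I * ↑t) = 0 := by
    intro x t hx ht
    have hconj : (starRingEnd ℂ) (↑x + Complex.I * ↑t) = ↑x - Complex.I * ↑t := by
      simp [map_add, map_mul, Complex.conj_ofReal, Complex.conj_I]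
      ring
    have habs : ‖↑x + Complex.I * ↑t‖ < ε := by
      calc ‖↑x + Complex.I * ↑t‖
          ≤ ‖(↑x : ℂ)‖ + ‖Complex.I * ↑t‖ := norm_add_le _ _
        _ = |x| + |t| := by simp [Complex.norm_real]
        _ < δ + δ := by linarith
        _ = ε := hδε
    have := hdiag _ habs
    rw [hconj] at this
    simp only [hF]
    rw [this]
    ring
  have habs_sub : ∀ a b : ℂ, ‖a - b‖ ≤ ‖a‖ + ‖b‖ := by
    intro a b
    simpa using norm_sub_le a b
  have hAn : ∀ (a b : ℂ → ℂ), (∀ s, ‖s‖ < δ → ‖a s‖ < ε ∧ ‖b s‖ < ε) →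
      (∀ s, DifferentiableAt ℂ a s) → (∀ s, DifferentiableAt ℂ b s) →
      AnalyticOnNhd ℂ (fun s => F (a s) (b s)) (Metric.ball 0 δ) := by
    intro a b hab ha hb
    have : DifferentiableOn ℂ (fun s => F (a s) (b s)) (Metric.ball 0 δ) := by
      intro s hs
      rw [Metric.mem_ball, dist_zero_right] at hs
      obtain ⟨h1, h2⟩ := hab s hs
      apply DifferentiableAt.differentiableWithinAt
      apply DifferentiableAt.sub
      · apply DifferentiableAt.fun_sum
        intro i _
        exact ((hfd i _ h1).comp s (ha s)).mul ((hgd i _ h2).comp s (hb s))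
      · exact (((differentiableAt_const _).add ((ha s).mul (hb s))).pow r)
    exact this.analyticOnNhd Metric.isOpen_ball
  -- Step A: vanishing for real t, all s
  have stepA : ∀ t : ℝ, |t| < δ → ∀ s : ℂ, ‖s‖ < δ →
      F (s + Complex.I * ↑t) (s - Complex.I * ↑t) = 0 := by
    intro t ht
    have han : AnalyticOnNhd ℂ (fun s => F (s + Complex.I * ↑t) (s - Complex.I * ↑t))
        (Metric.ball 0 δ) := by
      apply hAn
      · intro s hs
        constructor
        · calc ‖s + Complex.I * ↑t‖
              ≤ ‖s‖ + ‖Complex.I * ↑t‖ := norm_add_le _ _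
            _ = ‖s‖ + |t| := by simp [Complex.norm_real]
            _ < δ + δ := by linarith
            _ = ε := hδε
        · calc ‖s - Complex.I * ↑t‖
              ≤ ‖s‖ + ‖Complex.I * ↑t‖ := habs_sub _ _
            _ = ‖s‖ + |t| := by simp [Complex.norm_real]
            _ < δ + δ := by linarith
            _ = ε := hδε
      · intro s; exact differentiableAt_id.add_const _
      · intro s; exact differentiableAt_id.sub_const _
    have hfreq : ∃ᶠ s in 𝓝[≠] (0:ℂ),
        F (s + Complex.I * ↑t) (s - Complex.I * ↑t) = 0 := by
      have htend : Tendsto (fun n : ℕ => ((δ/2/(n+1) : ℝ) : ℂ)) atTop (𝓝[≠] (0:ℂ)) := by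
        apply tendsto_nhdsWithin_of_tendsto_nhds_of_eventually_within
        · have h1 : Tendsto (fun n : ℕ => (δ/2/(n+1) : ℝ)) atTop (𝓝 0) := by
            apply Tendsto.div_atTop tendsto_const_nhds
            exact tendsto_natCast_atTop_atTop.atTop_add tendsto_const_nhds
          simpa only [Function.comp_def, Complex.ofReal_zero]
            using (Complex.continuous_ofReal.tendsto 0).comp h1
        · filter_upwards with n
          simp only [Set.mem_compl_iff, Set.mem_singleton_iff]
          intro h
          have : (δ/2/(n+1) : ℝ) = 0 := by exact_mod_cast h
          have : (0:ℝ) < δ/2/(n+1) := by positivity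
          linarith
      apply htend.frequently
      apply Frequently.of_forall
      intro n
      have hb : |δ/2/(n+1 : ℝ)| < δ := by
        rw [abs_of_pos (by positivity)]
        rw [div_lt_iff₀ (by positivity)]
        nlinarith [hδpos, Nat.cast_nonneg (α := ℝ) n]
      exact hreal _ t hb ht
    have := han.eqOn_zero_of_preconnected_of_frequently_eq_zero
      (convex_ball (0:ℂ) δ).isPreconnected (Metric.mem_ball_self hδpos) hfreq
    intro s hs
    have := this (by rw [Metric.mem_ball, dist_zero_right]; exact hs)
    simpa using this
  -- Step B: vanishing for all s, t
  have stepB : ∀ s : ℂ, ‖s‖ < δ → ∀ t : ℂ, ‖t‖ < δ →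
      F (s + Complex.I * t) (s - Complex.I * t) = 0 := by
    intro s hs
    have han : AnalyticOnNhd ℂ (fun t => F (s + Complex.I * t) (s - Complex.I * t))
        (Metric.ball 0 δ) := by
      apply hAn
      · intro t htd
        constructor
        · calc ‖s + Complex.I * t‖
              ≤ ‖s‖ + ‖Complex.I * t‖ := norm_add_le _ _
            _ = ‖s‖ + ‖t‖ := by simp
            _ < δ + δ := by linarith
            _ = ε := hδε
        · calc ‖s - Complex.I * t‖
              ≤ ‖s‖ + ‖Complex.I * t‖ := habs_sub _ _
            _ = ‖s‖ + ‖t‖ := by simp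
            _ < δ + δ := by linarith
            _ = ε := hδε
      · intro t
        exact (differentiableAt_const _).add (differentiableAt_id.const_mul _)
      · intro t
        exact (differentiableAt_const _).sub (differentiableAt_id.const_mul _)
    have hfreq : ∃ᶠ t in 𝓝[≠] (0:ℂ),
        F (s + Complex.I * t) (s - Complex.I * t) = 0 := by
      have htend : Tendsto (fun n : ℕ => ((δ/2/(n+1) : ℝ) : ℂ)) atTop (𝓝[≠] (0:ℂ)) := by
        apply tendsto_nhdsWithin_of_tendsto_nhds_of_eventually_within
        · have h1 : Tendsto (fun n : ℕ => (δ/2/(n+1) : ℝ)) atTop (𝓝 0) := by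
            apply Tendsto.div_atTop tendsto_const_nhds
            exact tendsto_natCast_atTop_atTop.atTop_add tendsto_const_nhds
          simpa only [Function.comp_def, Complex.ofReal_zero]
            using (Complex.continuous_ofReal.tendsto 0).comp h1
        · filter_upwards with n
          simp only [Set.mem_compl_iff, Set.mem_singleton_iff]
          intro h
          have : (δ/2/(n+1) : ℝ) = 0 := by exact_mod_cast h
          have : (0:ℝ) < δ/2/(n+1) := by positivity
          linarith
      apply htend.frequently
      apply Frequently.of_forall
      intro n
      have hb : |δ/2/(n+1 : ℝ)| < δ := by
        rw [abs_of_pos (by positivity)]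
        rw [div_lt_iff₀ (by positivity)]
        nlinarith [hδpos, Nat.cast_nonneg (α := ℝ) n]
      exact stepA _ hb s hs
    have := han.eqOn_zero_of_preconnected_of_frequently_eq_zero
      (convex_ball (0:ℂ) δ).isPreconnected (Metric.mem_ball_self hδpos) hfreq
    intro t htd
    have := this (by rw [Metric.mem_ball, dist_zero_right]; exact htd)
    simpa using this
  -- Step C : the polarized identity
  have key : ∀ z w : ℂ, ‖z‖ < δ → ‖w‖ < δ →
      (∑ i, f i z * g i w) = (1 + z * w) ^ r := by
    intro z w hz hw
    set s := (z + w)/2 with hs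
    set t := (w - z) * Complex.I / 2 with ht
    have hz' : s + Complex.I * t = z := by
      rw [hs, ht]
      linear_combination ((w - z)/2) * Complex.I_sq
    have hw' : s - Complex.I * t = w := by
      rw [hs, ht]
      linear_combination ((z - w)/2) * Complex.I_sq
    have hsabs : ‖s‖ < δ := by
      rw [hs]
      calc ‖(z + w)/2‖ = ‖z + w‖ / 2 := by
            simp [map_div₀]
        _ ≤ (‖z‖ + ‖w‖) / 2 := by
            have := norm_add_le z w; linarith
        _ < δ := by linarith
    have htabs : ‖t‖ < δ := by
      rw [ht]
      have : ‖(w - z) * Complex.I / 2‖ = ‖w - z‖ / 2 := by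
        simp [map_div₀]
      rw [this]
      calc ‖w - z‖ / 2 ≤ (‖w‖ + ‖z‖)/2 := by
            have := habs_sub w z
            linarith
        _ < δ := by linarith
    have h2 := stepB s hsabs t htabs
    rw [hz', hw'] at h2
    simp only [hF] at h2
    exact sub_eq_zero.mp h2
  -- final rank argument
  by_contra hlt
  push_neg at hlt
  set η := δ / (r + 1) with hη
  have hηpos : 0 < η := by positivity
  set p : Fin (r+1) → ℂ := fun j => ((j : ℕ) : ℂ) * (η : ℂ) with hp
  have hpabs : ∀ j, ‖p j‖ < δ := by
    intro j
    have h1 : ‖p j‖ = (j : ℕ) * η := by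
      rw [hp, norm_mul, Complex.norm_natCast, Complex.norm_real, Real.norm_eq_abs, abs_of_pos hηpos]
    rw [h1, hη]
    have hj : ((j : ℕ) : ℝ) < (r : ℝ) + 1 := by
      exact_mod_cast j.isLt
    rw [div_eq_mul_inv, ← mul_assoc]
    calc (j:ℕ) * δ * ((r:ℝ)+1)⁻¹ < ((r:ℝ)+1) * δ * ((r:ℝ)+1)⁻¹ := by
          apply mul_lt_mul_of_pos_right _ (by positivity)
          exact mul_lt_mul_of_pos_right hj hδpos
      _ = δ := by field_simp
  have hpinj : Function.Injective p := by
    intro a b hab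
    rw [hp] at hab
    simp only [mul_eq_mul_right_iff] at hab
    rcases hab with h | h
    · exact Fin.ext (by exact_mod_cast h)
    · exfalso
      rw [Complex.ofReal_eq_zero] at h
      exact hηpos.ne' h
  set A : Matrix (Fin (r+1)) (Fin (N+1)) ℂ := Matrix.of (fun j i => f i (p j)) with hA
  set B : Matrix (Fin (N+1)) (Fin (r+1)) ℂ := Matrix.of (fun i k => g i (p k)) with hB
  set V : Matrix (Fin (r+1)) (Fin (r+1)) ℂ := Matrix.vandermonde p with hV
  set D : Matrix (Fin (r+1)) (Fin (r+1)) ℂ :=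
    Matrix.diagonal (fun m : Fin (r+1) => ((r.choose m) : ℂ)) with hD
  have hM : A * B = V * D * V.transpose := by
    ext j k
    rw [Matrix.mul_apply, Matrix.mul_apply]
    have hL : ∑ i, A j i * B i k = (1 + p j * p k) ^ r := by
      simp only [hA, hB, Matrix.of_apply]
      exact key (p j) (p k) (hpabs j) (hpabs k)
    rw [hL]
    have hR : ∀ m : Fin (r+1), (V * D) j m * V.transpose m k
        = (p j * p k) ^ (m : ℕ) * ((r.choose m) : ℂ) := by
      intro m
      rw [Matrix.mul_diagonal, Matrix.transpose_apply]
      simp only [hV, Matrix.vandermonde_apply]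
      ring
    rw [Finset.sum_congr rfl fun m _ => hR m]
    rw [Fin.sum_univ_eq_sum_range (fun m => (p j * p k) ^ m * ((r.choose m) : ℂ)) (r+1)]
    rw [add_comm (1 : ℂ) (p j * p k), add_pow]
    exact Finset.sum_congr rfl fun m _ => by ring
  have hdet : (A * B).det ≠ 0 := by
    rw [hM, Matrix.det_mul, Matrix.det_mul, Matrix.det_transpose, Matrix.det_diagonal]
    apply mul_ne_zero (mul_ne_zero _ _) _
    · exact (Matrix.det_vandermonde_ne_zero_iff.mpr hpinj)
    · apply Finset.prod_ne_zero_iff.mpr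
      intro m _
      exact_mod_cast (Nat.choose_pos (Nat.lt_succ_iff.mp m.isLt)).ne'
    · exact (Matrix.det_vandermonde_ne_zero_iff.mpr hpinj)
  have hsurj : Function.Surjective (A * B).mulVec :=
    Matrix.mulVec_surjective_iff_isUnit.mpr ((Matrix.isUnit_iff_isUnit_det _).mpr
      (isUnit_iff_ne_zero.mpr hdet))
  have hAsurj : Function.Surjective A.mulVec := by
    intro y
    obtain ⟨x, hx⟩ := hsurj y
    exact ⟨B.mulVec x, by rw [Matrix.mulVec_mulVec]; exact hx⟩
  have hAsurj' : Function.Surjective (Matrix.mulVecLin A) := by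
    simpa [Matrix.coe_mulVecLin] using hAsurj
  have hle := LinearMap.finrank_range_le (Matrix.mulVecLin A)
  rw [LinearMap.range_eq_top.mpr hAsurj', finrank_top] at hle
  rw [Module.finrank_fin_fun, Module.finrank_fin_fun] at hle
  omega
end

section
/- There do not exist holomorphic functions k₁, k₂ on a nonempty connected open subset U of ℂ such that (1 + |k₁(z)|² + |k₂(z)|²)² = (1 + |z|²)³ for all z ∈ U. -/
open Complex Finset

local notation "conj'" => starRingEnd ℂ

private lemma wirtinger_step {ι : Type} [Fintype ι] {U : Set ℂ} (hU : IsOpen U)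
    {A B A' B' : ι → ℂ → ℂ}
    (hA : ∀ j, ∀ z ∈ U, HasDerivAt (A j) (A' j z) z)
    (hB : ∀ j, ∀ z ∈ U, HasDerivAt (B j) (B' j z) z)
    (h : ∀ z ∈ U, ∑ j, A j z * conj' (B j z) = 0) :
    (∀ z ∈ U, ∑ j, A' j z * conj' (B j z) = 0) ∧
    (∀ z ∈ U, ∑ j, A j z * conj' (B' j z) = 0) := by
  have main : ∀ z ∈ U, (∑ j, A' j z * conj' (B j z)) = 0 ∧ (∑ j, A j z * conj' (B' j z)) = 0 := by
    intro z hz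
    set conjL : ℂ →L[ℝ] ℂ := Complex.conjCLE.toContinuousLinearMap with hconjL
    have hj : ∀ j : ι, HasFDerivAt (fun w => A j w * conj' (B j w))
        ((A j z) • (conjL.comp (((1 : ℂ →L[ℂ] ℂ).smulRight (B' j z)).restrictScalars ℝ))
          + (conj' (B j z)) • (((1 : ℂ →L[ℂ] ℂ).smulRight (A' j z)).restrictScalars ℝ)) z := by
      intro j
      have ha : HasFDerivAt (A j) (((1 : ℂ →L[ℂ] ℂ).smulRight (A' j z)).restrictScalars ℝ) z :=
        ((hA j z hz).hasFDerivAt).restrictScalars ℝ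
      have hb : HasFDerivAt (B j) (((1 : ℂ →L[ℂ] ℂ).smulRight (B' j z)).restrictScalars ℝ) z :=
        ((hB j z hz).hasFDerivAt).restrictScalars ℝ
      have hcb : HasFDerivAt (fun w => conj' (B j w))
          (conjL.comp (((1 : ℂ →L[ℂ] ℂ).smulRight (B' j z)).restrictScalars ℝ)) z :=
        (conjL.hasFDerivAt).comp z hb
      exact ha.mul hcb
    have hsum := HasFDerivAt.fun_sum (fun j (_ : j ∈ (univ : Finset ι)) => hj j)
    have hzero : HasFDerivAt (fun w => ∑ j, A j w * conj' (B j w)) (0 : ℂ →L[ℝ] ℂ) z :=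
      (hasFDerivAt_const (0:ℂ) z).congr_of_eventuallyEq
        (Filter.eventuallyEq_of_mem (hU.mem_nhds hz) (fun w hw => h w hw))
    have hL := hsum.unique hzero
    have ev : ∀ v : ℂ, ∑ j, (A j z * (conj' v * conj' (B' j z)) + conj' (B j z) * (v * A' j z)) = 0 := by
      intro v
      have h0 := congrArg (fun (L : ℂ →L[ℝ] ℂ) => L v) hL
      simpa [ContinuousLinearMap.sum_apply, ContinuousLinearMap.add_apply,
        ContinuousLinearMap.smul_apply, ContinuousLinearMap.comp_apply,
        ContinuousLinearMap.coe_restrictScalars', ContinuousLinearMap.smulRight_apply,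
        ContinuousLinearMap.one_apply, smul_eq_mul, map_mul, hconjL] using h0
    set X := ∑ j, A' j z * conj' (B j z) with hX
    set Y := ∑ j, A j z * conj' (B' j z) with hY
    have ev' : ∀ v : ℂ, Y * conj' v + X * v = 0 := by
      intro v
      rw [← ev v, Finset.sum_add_distrib, hX, hY, Finset.sum_mul, Finset.sum_mul]
      congr 1
      · exact Finset.sum_congr rfl fun j _ => by ring
      · exact Finset.sum_congr rfl fun j _ => by ring
    have e1 := ev' 1
    have eI := ev' Complex.I
    simp only [map_one, mul_one, Complex.conj_I] at e1 eI
    constructor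
    · have h2 : (2 * Complex.I) * X = 0 := by linear_combination Complex.I * e1 + eI
      rcases mul_eq_zero.mp h2 with h3 | h3
      · exact absurd h3 (by simp [Complex.I_ne_zero])
      · exact h3
    · have h2 : (2 * Complex.I) * Y = 0 := by linear_combination Complex.I * e1 - eI
      rcases mul_eq_zero.mp h2 with h3 | h3
      · exact absurd h3 (by simp [Complex.I_ne_zero])
      · exact h3
  exact ⟨fun z hz => (main z hz).1, fun z hz => (main z hz).2⟩

private lemma an_iter {U : Set ℂ} {f : ℂ → ℂ} (hf : AnalyticOnNhd ℂ f U) :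
    ∀ m, AnalyticOnNhd ℂ (iteratedDeriv m f) U := by
  intro m; induction m with
  | zero => simpa [iteratedDeriv_zero] using hf
  | succ m ih => rw [iteratedDeriv_succ]; exact ih.deriv

private lemma hD_iter {U : Set ℂ} {f : ℂ → ℂ} (hf : AnalyticOnNhd ℂ f U) (a : ℕ)
    {z : ℂ} (hz : z ∈ U) :
    HasDerivAt (iteratedDeriv a f) (iteratedDeriv (a+1) f z) z := by
  rw [iteratedDeriv_succ]
  exact ((an_iter hf a) z hz).differentiableAt.hasDerivAt

section Leib
variable {U : Set ℂ} (hU : IsOpen U) {f g : ℂ → ℂ}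
  (hf : AnalyticOnNhd ℂ f U) (hg : AnalyticOnNhd ℂ g U)

local notation "D" => iteratedDeriv

include hU hf hg

private lemma leib1 : ∀ z ∈ U, D 1 (fun w => f w * g w) z
    = D 1 f z * D 0 g z + D 0 f z * D 1 g z := by
  intro z hz
  rw [iteratedDeriv_one]
  simp only [iteratedDeriv_zero]
  exact ((hD_iter hf 0 hz).congr_deriv (by rw [iteratedDeriv_one]) |>.mul
    ((hD_iter hg 0 hz).congr_deriv (by rw [iteratedDeriv_one]))).deriv

private lemma leib2 : ∀ z ∈ U, D 2 (fun w => f w * g w) z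
    = D 2 f z * D 0 g z + 2*(D 1 f z * D 1 g z) + D 0 f z * D 2 g z := by
  intro z hz
  have heq : iteratedDeriv 1 (fun w => f w * g w) =ᶠ[nhds z]
      fun w => D 1 f w * D 0 g w + D 0 f w * D 1 g w :=
    Filter.eventuallyEq_of_mem (hU.mem_nhds hz) (fun w hw => leib1 hU hf hg w hw)
  have h1 : HasDerivAt (fun w => D 1 f w * D 0 g w + D 0 f w * D 1 g w)
      ((D 2 f z * D 0 g z + D 1 f z * D 1 g z) + (D 1 f z * D 1 g z + D 0 f z * D 2 g z)) z :=
    ((hD_iter hf 1 hz).mul (hD_iter hg 0 hz)).add ((hD_iter hf 0 hz).mul (hD_iter hg 1 hz))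
  rw [iteratedDeriv_succ, heq.deriv_eq, h1.deriv]
  ring

private lemma leib3 : ∀ z ∈ U, D 3 (fun w => f w * g w) z
    = D 3 f z * D 0 g z + 3*(D 2 f z * D 1 g z) + 3*(D 1 f z * D 2 g z) + D 0 f z * D 3 g z := by
  intro z hz
  have heq : iteratedDeriv 2 (fun w => f w * g w) =ᶠ[nhds z]
      fun w => D 2 f w * D 0 g w + 2*(D 1 f w * D 1 g w) + D 0 f w * D 2 g w :=
    Filter.eventuallyEq_of_mem (hU.mem_nhds hz) (fun w hw => leib2 hU hf hg w hw)
  have h1 : HasDerivAt (fun w => D 2 f w * D 0 g w + 2*(D 1 f w * D 1 g w) + D 0 f w * D 2 g w)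
      (((D 3 f z * D 0 g z + D 2 f z * D 1 g z)
        + 2*(D 2 f z * D 1 g z + D 1 f z * D 2 g z))
        + (D 1 f z * D 2 g z + D 0 f z * D 3 g z)) z :=
    (((hD_iter hf 2 hz).mul (hD_iter hg 0 hz)).add
      (((hD_iter hf 1 hz).mul (hD_iter hg 1 hz)).const_mul 2)).add
      ((hD_iter hf 0 hz).mul (hD_iter hg 2 hz))
  rw [iteratedDeriv_succ, heq.deriv_eq, h1.deriv]
  ring

private lemma leib4 : ∀ z ∈ U, D 4 (fun w => f w * g w) z
    = D 4 f z * D 0 g z + 4*(D 3 f z * D 1 g z) + 6*(D 2 f z * D 2 g z)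
      + 4*(D 1 f z * D 3 g z) + D 0 f z * D 4 g z := by
  intro z hz
  have heq : iteratedDeriv 3 (fun w => f w * g w) =ᶠ[nhds z]
      fun w => D 3 f w * D 0 g w + 3*(D 2 f w * D 1 g w) + 3*(D 1 f w * D 2 g w)
        + D 0 f w * D 3 g w :=
    Filter.eventuallyEq_of_mem (hU.mem_nhds hz) (fun w hw => leib3 hU hf hg w hw)
  have h1 : HasDerivAt (fun w => D 3 f w * D 0 g w + 3*(D 2 f w * D 1 g w)
        + 3*(D 1 f w * D 2 g w) + D 0 f w * D 3 g w)
      ((((D 4 f z * D 0 g z + D 3 f z * D 1 g z)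
        + 3*(D 3 f z * D 1 g z + D 2 f z * D 2 g z))
        + 3*(D 2 f z * D 2 g z + D 1 f z * D 3 g z))
        + (D 1 f z * D 3 g z + D 0 f z * D 4 g z)) z :=
    ((((hD_iter hf 3 hz).mul (hD_iter hg 0 hz)).add
      (((hD_iter hf 2 hz).mul (hD_iter hg 1 hz)).const_mul 3)).add
      (((hD_iter hf 1 hz).mul (hD_iter hg 2 hz)).const_mul 3)).add
      ((hD_iter hf 0 hz).mul (hD_iter hg 3 hz))
  rw [iteratedDeriv_succ, heq.deriv_eq, h1.deriv]
  ring

end Leib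


private noncomputable def Gf (k₁ k₂ : ℂ → ℂ) (pr : Fin 3 × Fin 3) : ℂ → ℂ :=
  fun z => ![fun _ => 1, k₁, k₂] pr.1 z * ![fun _ => 1, k₁, k₂] pr.2 z

private noncomputable def famA (k₁ k₂ : ℂ → ℂ) (m : ℕ) :
    (Fin 3 × Fin 3) ⊕ Fin 4 → ℂ → ℂ
  | .inl pr => iteratedDeriv m (Gf k₁ k₂ pr)
  | .inr r => fun z => -((Nat.choose 3 r * Nat.descFactorial r m : ℕ) : ℂ) * z ^ ((r : ℕ) - m)

private noncomputable def famB (k₁ k₂ : ℂ → ℂ) (n : ℕ) :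
    (Fin 3 × Fin 3) ⊕ Fin 4 → ℂ → ℂ
  | .inl pr => iteratedDeriv n (Gf k₁ k₂ pr)
  | .inr r => fun z => ((Nat.descFactorial r n : ℕ) : ℂ) * z ^ ((r : ℕ) - n)


private lemma iter_const_one : ∀ n : ℕ, iteratedDeriv (n+1) (fun _ : ℂ => (1:ℂ)) = fun _ => 0 := by
  intro n; induction n with
  | zero => rw [iteratedDeriv_one]; exact deriv_const' 1
  | succ n ih => rw [iteratedDeriv_succ, ih]; exact deriv_const' 0

/-- There is no local holomorphic isometry realizing `(1+|k₁|²+|k₂|²)² = (1+|z|²)³`. -/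
theorem stmt_12 : ¬ ∃ (U : Set ℂ) (k₁ k₂ : ℂ → ℂ),
    IsOpen U ∧ U.Nonempty ∧ IsConnected U ∧
    DifferentiableOn ℂ k₁ U ∧ DifferentiableOn ℂ k₂ U ∧
    ∀ z ∈ U, (1 + ‖k₁ z‖ ^ 2 + ‖k₂ z‖ ^ 2) ^ 2
      = (1 + ‖z‖ ^ 2) ^ 3 := by
  rintro ⟨U, k₁, k₂, hU, ⟨p, hp⟩, -, hk₁, hk₂, heqn⟩
  have hak₁ : AnalyticOnNhd ℂ k₁ U := hk₁.analyticOnNhd hU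
  have hak₂ : AnalyticOnNhd ℂ k₂ U := hk₂.analyticOnNhd hU
  have hag : ∀ i : Fin 3, AnalyticOnNhd ℂ (![fun _ => (1:ℂ), k₁, k₂] i) U := by
    intro i; fin_cases i
    · exact analyticOnNhd_const
    · exact hak₁
    · exact hak₂
  have haG : ∀ pr : Fin 3 × Fin 3, AnalyticOnNhd ℂ (Gf k₁ k₂ pr) U :=
    fun pr => (hag pr.1).mul (hag pr.2)
  -- derivative facts for the two families
  have hDA : ∀ m j, ∀ z ∈ U, HasDerivAt (famA k₁ k₂ m j) (famA k₁ k₂ (m+1) j z) z := by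
    intro m j z hz
    match j with
    | .inl pr => exact hD_iter (haG pr) m hz
    | .inr r =>
      have h := (hasDerivAt_pow ((r : ℕ) - m) z).const_mul
        (-((Nat.choose 3 r * Nat.descFactorial r m : ℕ) : ℂ))
      convert h using 1
      show -((Nat.choose 3 ↑r * Nat.descFactorial ↑r (m+1) : ℕ) : ℂ) * z ^ ((r : ℕ) - (m+1)) = _
      rw [Nat.descFactorial_succ, ← Nat.sub_sub]
      push_cast
      ring
      all_goals rfl
  have hDB : ∀ n j, ∀ z ∈ U, HasDerivAt (famB k₁ k₂ n j) (famB k₁ k₂ (n+1) j z) z := by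
    intro n j z hz
    match j with
    | .inl pr => exact hD_iter (haG pr) n hz
    | .inr r =>
      have h := (hasDerivAt_pow ((r : ℕ) - n) z).const_mul
        (((Nat.descFactorial r n : ℕ) : ℂ))
      convert h using 1
      show ((Nat.descFactorial ↑r (n+1) : ℕ) : ℂ) * z ^ ((r : ℕ) - (n+1)) = _
      rw [Nat.descFactorial_succ, ← Nat.sub_sub]
      push_cast
      ring
      all_goals rfl
  -- base identity
  have base : ∀ z ∈ U, ∑ j, famA k₁ k₂ 0 j z * conj' (famB k₁ k₂ 0 j z) = 0 := by
    intro z hz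
    have hs : ∀ x : ℂ, ((‖x‖ : ℝ) : ℂ)^2 = x * conj' x := fun x => by
      rw [← Complex.ofReal_pow, Complex.sq_norm, Complex.mul_conj]
    have hC : (1 + k₁ z * conj' (k₁ z) + k₂ z * conj' (k₂ z))^2 = (1 + z * conj' z)^3 := by
      have h1 : ((1 + ‖k₁ z‖^2 + ‖k₂ z‖^2 : ℝ) : ℂ)^2
          = ((1 + ‖z‖^2 : ℝ) : ℂ)^3 := by
        exact_mod_cast congrArg (fun t : ℝ => (t:ℂ)) (heqn z hz)
      push_cast at h1
      rw [hs, hs, hs] at h1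
      exact h1
    have hfin0 : ((0 : Fin 4) : ℕ) = 0 := rfl
    have hfin1 : ((1 : Fin 4) : ℕ) = 1 := rfl
    have hfin2 : ((2 : Fin 4) : ℕ) = 2 := rfl
    have hfin3 : ((3 : Fin 4) : ℕ) = 3 := rfl
    rw [Fintype.sum_sum_type]
    simp only [famA, famB, iteratedDeriv_zero, Gf]
    rw [Fintype.sum_prod_type]
    simp only [Fin.sum_univ_three, Fin.sum_univ_four, Matrix.cons_val_zero,
      Matrix.cons_val_one, Matrix.head_cons, Matrix.cons_val_two, Matrix.tail_cons,
      hfin0, hfin1, hfin2, hfin3, Nat.descFactorial_zero, Nat.sub_zero, pow_zero,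
      map_mul, map_one, map_natCast, mul_one, one_mul]
    norm_num [Nat.choose]
    linear_combination hC
  -- the polarized identities at all derivative orders
  have key : ∀ m n, ∀ z ∈ U, ∑ j, famA k₁ k₂ m j z * conj' (famB k₁ k₂ n j z) = 0 := by
    have h0 : ∀ m, ∀ z ∈ U, ∑ j, famA k₁ k₂ m j z * conj' (famB k₁ k₂ 0 j z) = 0 := by
      intro m; induction m with
      | zero => exact base
      | succ m ih => exact (wirtinger_step hU (hDA m) (hDB 0) ih).1
    intro m n; induction n with
    | zero => exact h0 m
    | succ n ih => exact (wirtinger_step hU (hDA m) (hDB n) ih).2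
  -- all fourth derivatives of the products vanish on U
  have vanish4 : ∀ pr : Fin 3 × Fin 3, ∀ z ∈ U, iteratedDeriv 4 (Gf k₁ k₂ pr) z = 0 := by
    intro pr z hz
    have h := key 4 4 z hz
    rw [Fintype.sum_sum_type] at h
    have hinr : ∀ r : Fin 4, famA k₁ k₂ 4 (.inr r) z * conj' (famB k₁ k₂ 4 (.inr r) z) = 0 := by
      intro r
      have hd : Nat.descFactorial (r : ℕ) 4 = 0 :=
        Nat.descFactorial_eq_zero_iff_lt.mpr r.isLt
      have hb0 : famB k₁ k₂ 4 (.inr r) z = 0 := by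
        show ((Nat.descFactorial (r : ℕ) 4 : ℕ) : ℂ) * z ^ ((r : ℕ) - 4) = 0
        rw [hd]; simp
      rw [hb0, map_zero, mul_zero]
    rw [Finset.sum_eq_zero fun r _ => hinr r, add_zero] at h
    simp only [famA, famB, Complex.mul_conj] at h
    have hre : ∑ pr : Fin 3 × Fin 3, Complex.normSq (iteratedDeriv 4 (Gf k₁ k₂ pr) z) = 0 := by
      exact_mod_cast h
    have h4 := (Finset.sum_eq_zero_iff_of_nonneg
      (fun pr _ => Complex.normSq_nonneg _)).mp hre pr (Finset.mem_univ pr)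
    exact Complex.normSq_eq_zero.mp h4
  -- in particular for k₁, k₂ and their squares
  have hk₁4 : ∀ z ∈ U, iteratedDeriv 4 k₁ z = 0 := by
    intro z hz
    have h := vanish4 (0,1) z hz
    rwa [show Gf k₁ k₂ (0,1) = k₁ from funext fun w => one_mul _] at h
  have hk₂4 : ∀ z ∈ U, iteratedDeriv 4 k₂ z = 0 := by
    intro z hz
    have h := vanish4 (0,2) z hz
    rwa [show Gf k₁ k₂ (0,2) = k₂ from funext fun w => one_mul _] at h
  -- second and third derivatives of k₁, k₂ vanish on U
  have main23 : ∀ (k : ℂ → ℂ), AnalyticOnNhd ℂ k U → (∀ z ∈ U, iteratedDeriv 4 k z = 0) →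
      (∀ z ∈ U, iteratedDeriv 4 (fun w => k w * k w) z = 0) →
      ∀ z ∈ U, iteratedDeriv 2 k z = 0 ∧ iteratedDeriv 3 k z = 0 := by
    intro k hak h4 hsq4
    have hA : ∀ z ∈ U, 8*(iteratedDeriv 3 k z * iteratedDeriv 1 k z)
        + 6*(iteratedDeriv 2 k z * iteratedDeriv 2 k z) = 0 := by
      intro z hz
      have h := leib4 hU hak hak z hz
      rw [hsq4 z hz, h4 z hz] at h
      simp only [iteratedDeriv_zero] at h
      linear_combination -h
    have hB : ∀ z ∈ U, iteratedDeriv 3 k z * iteratedDeriv 2 k z = 0 := by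
      intro z hz
      have hder : HasDerivAt (fun w => 8*(iteratedDeriv 3 k w * iteratedDeriv 1 k w)
            + 6*(iteratedDeriv 2 k w * iteratedDeriv 2 k w))
          (8*(iteratedDeriv 4 k z * iteratedDeriv 1 k z
              + iteratedDeriv 3 k z * iteratedDeriv 2 k z)
            + 6*(iteratedDeriv 3 k z * iteratedDeriv 2 k z
              + iteratedDeriv 2 k z * iteratedDeriv 3 k z)) z :=
        (((hD_iter hak 3 hz).mul (hD_iter hak 1 hz)).const_mul 8).add
          (((hD_iter hak 2 hz).mul (hD_iter hak 2 hz)).const_mul 6)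
      have hzero : HasDerivAt (fun w => 8*(iteratedDeriv 3 k w * iteratedDeriv 1 k w)
            + 6*(iteratedDeriv 2 k w * iteratedDeriv 2 k w)) 0 z :=
        (hasDerivAt_const z (0:ℂ)).congr_of_eventuallyEq
          (Filter.eventuallyEq_of_mem (hU.mem_nhds hz) fun w hw => hA w hw)
      have h := hzero.unique hder
      rw [h4 z hz] at h
      have h20 : (20:ℂ) * (iteratedDeriv 3 k z * iteratedDeriv 2 k z) = 0 := by
        linear_combination -h
      have := mul_eq_zero.mp h20
      rcases this with h' | h'
      · norm_num at h'
      · exact h'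
    have hC3 : ∀ z ∈ U, iteratedDeriv 3 k z = 0 := by
      intro z hz
      have hder : HasDerivAt (fun w => iteratedDeriv 3 k w * iteratedDeriv 2 k w)
          (iteratedDeriv 4 k z * iteratedDeriv 2 k z
            + iteratedDeriv 3 k z * iteratedDeriv 3 k z) z :=
        (hD_iter hak 3 hz).mul (hD_iter hak 2 hz)
      have hzero : HasDerivAt (fun w => iteratedDeriv 3 k w * iteratedDeriv 2 k w) 0 z :=
        (hasDerivAt_const z (0:ℂ)).congr_of_eventuallyEq
          (Filter.eventuallyEq_of_mem (hU.mem_nhds hz) fun w hw => hB w hw)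
      have h := hzero.unique hder
      rw [h4 z hz] at h
      have : iteratedDeriv 3 k z * iteratedDeriv 3 k z = 0 := by linear_combination -h
      exact mul_self_eq_zero.mp this
    intro z hz
    have h3 := hC3 z hz
    have h2 : iteratedDeriv 2 k z = 0 := by
      have h := hA z hz; rw [h3] at h
      have : iteratedDeriv 2 k z * iteratedDeriv 2 k z = 0 := by linear_combination h/6
      exact mul_self_eq_zero.mp this
    exact ⟨h2, h3⟩
  have hk₁23 := main23 k₁ hak₁ hk₁4 (vanish4 (1,1))
  have hk₂23 := main23 k₂ hak₂ hk₂4 (vanish4 (2,2))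
  -- third derivatives of all products vanish at p
  have hgi : ∀ i : Fin 3, iteratedDeriv 2 (![fun _ => (1:ℂ), k₁, k₂] i) p = 0
      ∧ iteratedDeriv 3 (![fun _ => (1:ℂ), k₁, k₂] i) p = 0 := by
    intro i; fin_cases i
    · exact ⟨congrFun (iter_const_one 1) p, congrFun (iter_const_one 2) p⟩
    · exact hk₁23 p hp
    · exact hk₂23 p hp
  have hG3 : ∀ pr : Fin 3 × Fin 3, iteratedDeriv 3 (Gf k₁ k₂ pr) p = 0 := by
    intro pr
    have h := leib3 hU (hag pr.1) (hag pr.2) p hp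
    rw [(hgi pr.1).2, (hgi pr.2).2, (hgi pr.1).1, (hgi pr.2).1] at h
    show iteratedDeriv 3 (fun w => ![fun _ => (1:ℂ), k₁, k₂] pr.1 w
      * ![fun _ => (1:ℂ), k₁, k₂] pr.2 w) p = 0
    rw [h]; ring
  -- the contradiction from order (3,3)
  have h33 := key 3 3 p hp
  rw [Fintype.sum_sum_type] at h33
  rw [Finset.sum_eq_zero (fun pr (_ : pr ∈ Finset.univ) => by
      simp [famA, hG3 pr] : ∀ pr ∈ Finset.univ,
        famA k₁ k₂ 3 (.inl pr) p * conj' (famB k₁ k₂ 3 (.inl pr) p) = 0),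
    zero_add] at h33
  have hfin0 : ((0 : Fin 4) : ℕ) = 0 := rfl
  have hfin1 : ((1 : Fin 4) : ℕ) = 1 := rfl
  have hfin2 : ((2 : Fin 4) : ℕ) = 2 := rfl
  have hfin3 : ((3 : Fin 4) : ℕ) = 3 := rfl
  rw [Fin.sum_univ_four] at h33
  simp only [famA, famB, hfin0, hfin1, hfin2, hfin3] at h33
  norm_num [Nat.descFactorial] at h33
end
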